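/- arXiv:math/0106143 — 7 statements merged into one kernel-verified Lean document; each statement's English description precedes it below -/
import Mathlib

section
/- Let X and Y be simplicial sets each equipped with a Maltsev structure, and let f : X ⟶ Y be a morphism of simplicial sets compatible with the Maltsev structures and surjective in every degree. Then for every n ≥ 1, every k with 0 ≤ k ≤ n, every family of elements x_i ∈ X_{n-1} indexed by i ∈ {0,…,n} \ {k} with matching faces (d_i x_j = d_{j-1} x_i whenever i < j, i ≠ k, j ≠ k), and every y ∈ Y_n with d_i y = f_{n-1}(x_i) for all i ≠ k, there exists x ∈ X_n with f_n(x) = y and d_i x = x_i for all i ≠ k. -/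
open CategoryTheory Simplicial SSet Opposite

universe u

set_option maxHeartbeats 1000000

/-- A Maltsev structure on a simplicial set `X`: a family of ternary operations,
one in each degree, commuting with the action of every morphism of the simplex
category and satisfying the Maltsev identities. -/
structure MaltsevStructure (X : SSet.{u}) where
  mal : ∀ s : SimplexCategoryᵒᵖ, X.obj s → X.obj s → X.obj s → X.obj s
  natural : ∀ {s t : SimplexCategoryᵒᵖ} (φ : s ⟶ t) (a b c : X.obj s),
    X.map φ (mal s a b c) = mal t (X.map φ a) (X.map φ b) (X.map φ c)
  mal_left : ∀ (s : SimplexCategoryᵒᵖ) (a b : X.obj s), mal s a a b = b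
  mal_right : ∀ (s : SimplexCategoryᵒᵖ) (a b : X.obj s), mal s a b b = a

/-- A morphism of simplicial sets is compatible with given Maltsev structures if
it commutes with the ternary operations in every degree. -/
def MaltsevCompatible {X Y : SSet.{u}} (f : X ⟶ Y)
    (mX : MaltsevStructure X) (mY : MaltsevStructure Y) : Prop :=
  ∀ (s : SimplexCategoryᵒᵖ) (a b c : X.obj s),
    f.app s (mX.mal s a b c) = mY.mal s (f.app s a) (f.app s b) (f.app s c)

/-- Transport of simplices along an equality of dimensions. -/
def castDim (X : SSet.{u}) {a b : ℕ} (h : a = b) (x : X _⦋a⦌) : X _⦋b⦌ := h ▸ x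

/-- Core lemma: the case `n = m + 1` with a clean matching hypothesis. -/
theorem maltsev_core {X Y : SSet.{u}} (mX : MaltsevStructure X) (mY : MaltsevStructure Y)
    (f : X ⟶ Y) (hcompat : MaltsevCompatible f mX mY)
    (hsurj : ∀ s : SimplexCategoryᵒᵖ, Function.Surjective (f.app s))
    (m : ℕ) (k : Fin (m + 3)) (x : ∀ i : Fin (m + 3), i ≠ k → X _⦋m + 1⦌)
    (hm : ∀ (i j : Fin (m + 3)) (_ : (i : ℕ) < (j : ℕ)) (hik : i ≠ k) (hjk : j ≠ k)
      (h1 : (i : ℕ) < m + 2) (h2 : (j : ℕ) - 1 < m + 2),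
      X.δ ⟨(i : ℕ), h1⟩ (x j hjk) = X.δ ⟨(j : ℕ) - 1, h2⟩ (x i hik))
    (y : Y _⦋m + 2⦌)
    (hy : ∀ (i : Fin (m + 3)) (hik : i ≠ k), Y.δ i y = f.app (op ⦋m + 1⦌) (x i hik)) :
    ∃ w : X _⦋m + 2⦌, f.app (op ⦋m + 2⦌) w = y ∧
      ∀ (i : Fin (m + 3)) (hik : i ≠ k), X.δ i w = x i hik := by
  -- naturality of f with faces and degeneracies
  have fδ : ∀ (i : Fin (m + 3)) (u : X _⦋m + 2⦌),
      f.app (op ⦋m + 1⦌) (X.δ i u) = Y.δ i (f.app (op ⦋m + 2⦌) u) :=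
    fun i u => FunctorToTypes.naturality f (SimplexCategory.δ i).op u
  have fσ : ∀ (t : Fin (m + 2)) (u : X _⦋m + 1⦌),
      f.app (op ⦋m + 2⦌) (X.σ t u) = Y.σ t (f.app (op ⦋m + 1⦌) u) :=
    fun t u => FunctorToTypes.naturality f (SimplexCategory.σ t).op u
  -- mal commutes with faces
  have δmalX : ∀ (j : Fin (m + 3)) (a b c : X _⦋m + 2⦌),
      X.δ j (mX.mal _ a b c) = mX.mal _ (X.δ j a) (X.δ j b) (X.δ j c) :=
    fun j a b c => mX.natural (SimplexCategory.δ j).op a b c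
  -- correction step: image under f is unchanged
  have key1 : ∀ (w : X _⦋m + 2⦌) (i : Fin (m + 3)) (hik : i ≠ k) (t : Fin (m + 2)),
      f.app (op ⦋m + 2⦌) w = y →
      f.app (op ⦋m + 2⦌) (mX.mal _ w (X.σ t (X.δ i w)) (X.σ t (x i hik))) = y := by
    intro w i hik t hw
    rw [hcompat, fσ, fσ, fδ, hw, ← hy i hik, mY.mal_right]
  -- correction step: the i-th face becomes x i
  have key2 : ∀ (w : X _⦋m + 2⦌) (i : Fin (m + 3)) (xi : X _⦋m + 1⦌) (t : Fin (m + 2)),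
      (∀ u : X _⦋m + 1⦌, X.δ i (X.σ t u) = u) →
      X.δ i (mX.mal _ w (X.σ t (X.δ i w)) (X.σ t xi)) = xi := by
    intro w i xi t hid
    rw [δmalX, hid, hid, mX.mal_left]
  -- correction step: other faces unchanged, provided the two σ-terms agree
  have key3 : ∀ (w : X _⦋m + 2⦌) (i j : Fin (m + 3)) (xi : X _⦋m + 1⦌) (t : Fin (m + 2)),
      X.δ j (X.σ t (X.δ i w)) = X.δ j (X.σ t xi) →
      X.δ j (mX.mal _ w (X.σ t (X.δ i w)) (X.σ t xi)) = X.δ j w := by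
    intro w i j xi t h
    rw [δmalX, h, mX.mal_right]
  -- simplicial identities, pointwise
  have δσ_id : ∀ (b : Fin (m + 3)) (t : Fin (m + 2)),
      ((b : ℕ) = t ∨ (b : ℕ) = (t : ℕ) + 1) → ∀ u : X _⦋m + 1⦌, X.δ b (X.σ t u) = u := by
    intro b t h u
    rcases h with h | h
    · simpa using ConcreteCategory.congr_hom (X.δ_comp_σ_self' (i := t) (j := b) (by ext; simpa using h)) u
    · simpa using ConcreteCategory.congr_hom (X.δ_comp_σ_succ' (i := t) (j := b) (by ext; simpa using h)) u
  have δσ_lt : ∀ (b : Fin (m + 3)) (t : Fin (m + 2)) (_ : (b : ℕ) < t)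
      (h1 : (b : ℕ) < m + 2) (h2 : (t : ℕ) - 1 < m + 1) (u : X _⦋m + 1⦌),
      X.δ b (X.σ t u) = X.σ ⟨(t : ℕ) - 1, h2⟩ (X.δ ⟨(b : ℕ), h1⟩ u) := by
    intro b t h h1 h2 u
    have e1 : b = Fin.castSucc ⟨(b : ℕ), h1⟩ := by ext; simp
    have e2 : t = Fin.succ ⟨(t : ℕ) - 1, h2⟩ := by ext; simp; omega
    have H := ConcreteCategory.congr_hom (X.δ_comp_σ_of_le (i := ⟨(b : ℕ), h1⟩) (j := ⟨(t : ℕ) - 1, h2⟩)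
      (by rw [Fin.le_def]; simp; omega)) u
    simp only [types_comp_apply] at H
    rw [← e1, ← e2] at H
    exact H
  have δσ_gt : ∀ (b : Fin (m + 3)) (t : Fin (m + 2)) (_ : (t : ℕ) + 1 < b)
      (h1 : (b : ℕ) - 1 < m + 2) (h2 : (t : ℕ) < m + 1) (u : X _⦋m + 1⦌),
      X.δ b (X.σ t u) = X.σ ⟨(t : ℕ), h2⟩ (X.δ ⟨(b : ℕ) - 1, h1⟩ u) := by
    intro b t h h1 h2 u
    have e1 : b = Fin.succ ⟨(b : ℕ) - 1, h1⟩ := by ext; simp; omega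
    have e2 : t = Fin.castSucc ⟨(t : ℕ), h2⟩ := by ext; simp
    have H := ConcreteCategory.congr_hom (X.δ_comp_σ_of_gt (i := ⟨(b : ℕ) - 1, h1⟩) (j := ⟨(t : ℕ), h2⟩)
      (by rw [Fin.lt_def]; simp; omega)) u
    simp only [types_comp_apply] at H
    rw [← e1, ← e2] at H
    exact H
  have δδ : ∀ (a b : Fin (m + 2)) (_ : (a : ℕ) ≤ b) (u : X _⦋m + 2⦌),
      X.δ a (X.δ b.succ u) = X.δ b (X.δ a.castSucc u) := by
    intro a b hab u
    simpa using ConcreteCategory.congr_hom (X.δ_comp_δ (i := a) (j := b) (by rwa [Fin.le_def])) u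
  -- Pass 1: fix the faces below k, in increasing order
  have pass1 : ∀ r : ℕ, r ≤ (k : ℕ) → ∃ w : X _⦋m + 2⦌, f.app (op ⦋m + 2⦌) w = y ∧
      ∀ (j : Fin (m + 3)) (hjk : j ≠ k), (j : ℕ) < r → X.δ j w = x j hjk := by
    intro r
    induction r with
    | zero =>
      intro _
      obtain ⟨w, hw⟩ := hsurj _ y
      exact ⟨w, hw, fun j hjk h => absurd h (by omega)⟩
    | succ r ih =>
      intro hr
      obtain ⟨w, hwf, hwδ⟩ := ih (by omega)
      have hrm : r < m + 2 := by omega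
      have hrm3 : r < m + 3 := by omega
      have hik : (⟨r, hrm3⟩ : Fin (m + 3)) ≠ k := Fin.ne_of_val_ne (by simp; omega)
      refine ⟨mX.mal _ w (X.σ ⟨r, hrm⟩ (X.δ ⟨r, hrm3⟩ w)) (X.σ ⟨r, hrm⟩ (x _ hik)),
        key1 w _ hik _ hwf, ?_⟩
      intro j hjk hj
      rcases Nat.lt_or_ge (j : ℕ) r with hjr | hjr
      · -- j < r : face unchanged, and it was already correct
        rw [key3 w _ j (x _ hik) _ ?_]
        · exact hwδ j hjk (by omega)
        have hj1 : (j : ℕ) < m + 2 := by omega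
        have hr1 : r - 1 < m + 2 := by omega
        have hdd := δδ ⟨(j : ℕ), hj1⟩ ⟨r - 1, hr1⟩ (by simp; omega) w
        have hsucc : Fin.succ (⟨r - 1, hr1⟩ : Fin (m + 2)) = (⟨r, hrm3⟩ : Fin (m + 3)) := by
          ext; simp; omega
        have hcs : Fin.castSucc (⟨(j : ℕ), hj1⟩ : Fin (m + 2)) = j := by ext; simp
        rw [hsucc, hcs, hwδ j hjk (by omega)] at hdd
        have HM := (hm j ⟨r, hrm3⟩ (by simp; omega) hjk hik hj1 (by simp; omega)).symm
        have hidx : (⟨(r : ℕ) - 1, by omega⟩ : Fin (m + 2)) = ⟨r - 1, hr1⟩ := rfl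
        have hsub : X.δ (⟨(j : ℕ), hj1⟩ : Fin (m + 2)) (X.δ (⟨r, hrm3⟩ : Fin (m + 3)) w)
            = X.δ ⟨(j : ℕ), hj1⟩ (x (⟨r, hrm3⟩ : Fin (m + 3)) hik) := by
          rw [hdd]; exact HM
        rw [δσ_lt j ⟨r, hrm⟩ (by simpa using hjr) hj1 (by simp; omega) (X.δ ⟨r, hrm3⟩ w),
          δσ_lt j ⟨r, hrm⟩ (by simpa using hjr) hj1 (by simp; omega) (x ⟨r, hrm3⟩ hik), hsub]
      · -- j = r : the face we just fixed
        have hji : j = (⟨r, hrm3⟩ : Fin (m + 3)) := by ext; simp; omega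
        subst hji
        exact key2 w _ (x _ hjk) ⟨r, hrm⟩ (δσ_id _ _ (Or.inl (by simp)))
  -- Pass 2: fix the faces above k, in decreasing order
  have pass2 : ∀ s : ℕ, s ≤ (m + 2) - (k : ℕ) → ∃ w : X _⦋m + 2⦌,
      f.app (op ⦋m + 2⦌) w = y ∧
      (∀ (j : Fin (m + 3)) (hjk : j ≠ k), (j : ℕ) < (k : ℕ) → X.δ j w = x j hjk) ∧
      (∀ (j : Fin (m + 3)) (hjk : j ≠ k), m + 3 - s ≤ (j : ℕ) → X.δ j w = x j hjk) := by
    intro s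
    induction s with
    | zero =>
      intro _
      obtain ⟨w, hwf, hwδ⟩ := pass1 (k : ℕ) le_rfl
      exact ⟨w, hwf, fun j hjk hj => hwδ j hjk hj,
        fun j hjk hj => absurd hj (by omega)⟩
    | succ s ih =>
      intro hs
      obtain ⟨w, hwf, hlo, hhi⟩ := ih (by omega)
      have hkm : (k : ℕ) < m + 3 := k.isLt
      have hiv : m + 2 - s < m + 3 := by omega
      have hik : (⟨m + 2 - s, hiv⟩ : Fin (m + 3)) ≠ k := Fin.ne_of_val_ne (by simp; omega)
      have htv : m + 1 - s < m + 2 := by omega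
      refine ⟨mX.mal _ w (X.σ ⟨m + 1 - s, htv⟩ (X.δ ⟨m + 2 - s, hiv⟩ w))
        (X.σ ⟨m + 1 - s, htv⟩ (x _ hik)), key1 w _ hik _ hwf, ?_, ?_⟩
      · -- low faces unchanged
        intro j hjk hj
        rw [key3 w _ j (x _ hik) _ ?_]
        · exact hlo j hjk hj
        have hj1 : (j : ℕ) < m + 2 := by omega
        have hjt : (j : ℕ) < m + 1 - s := by omega
        have hdd := δδ ⟨(j : ℕ), hj1⟩ ⟨m + 1 - s, htv⟩ (by simp; omega) w
        have hsucc : Fin.succ (⟨m + 1 - s, htv⟩ : Fin (m + 2))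
            = (⟨m + 2 - s, hiv⟩ : Fin (m + 3)) := by ext; simp; omega
        have hcs : Fin.castSucc (⟨(j : ℕ), hj1⟩ : Fin (m + 2)) = j := by ext; simp
        rw [hsucc, hcs, hlo j hjk hj] at hdd
        have HM := (hm j ⟨m + 2 - s, hiv⟩ (by simp; omega) hjk hik hj1 (by simp; omega)).symm
        have hidx : (⟨(m + 2 - s) - 1, by omega⟩ : Fin (m + 2)) = ⟨m + 1 - s, htv⟩ := by
          ext; simp; omega
        rw [hidx] at HM
        have hsub : X.δ (⟨(j : ℕ), hj1⟩ : Fin (m + 2))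
              (X.δ (⟨m + 2 - s, hiv⟩ : Fin (m + 3)) w)
            = X.δ ⟨(j : ℕ), hj1⟩ (x (⟨m + 2 - s, hiv⟩ : Fin (m + 3)) hik) := by
          rw [hdd]; exact HM
        rw [δσ_lt j ⟨m + 1 - s, htv⟩ (by simpa using hjt) hj1 (by simp)
            (X.δ ⟨m + 2 - s, hiv⟩ w),
          δσ_lt j ⟨m + 1 - s, htv⟩ (by simpa using hjt) hj1 (by simp)
            (x ⟨m + 2 - s, hiv⟩ hik), hsub]
      · -- high faces
        intro j hjk hj
        rcases Nat.lt_or_ge (m + 2 - s) (j : ℕ) with hji | hji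
        · -- j > i : face unchanged, already correct
          have hs1 : 1 ≤ s := by omega
          rw [key3 w _ j (x _ hik) _ ?_]
          · exact hhi j hjk (by omega)
          have hj1 : (j : ℕ) - 1 < m + 2 := by omega
          have ht2 : m + 1 - s < m + 1 := by omega
          have hia : m + 2 - s < m + 2 := by omega
          have hdd := δδ ⟨m + 2 - s, hia⟩ ⟨(j : ℕ) - 1, hj1⟩ (by simp; omega) w
          have hsj : Fin.succ (⟨(j : ℕ) - 1, hj1⟩ : Fin (m + 2)) = j := by ext; simp; omega
          have hci : Fin.castSucc (⟨m + 2 - s, hia⟩ : Fin (m + 2))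
              = (⟨m + 2 - s, hiv⟩ : Fin (m + 3)) := by ext; simp
          rw [hsj, hci, hhi j hjk (by omega)] at hdd
          have HM := hm ⟨m + 2 - s, hiv⟩ j (by simp; omega) hik hjk hia hj1
          rw [δσ_gt j ⟨m + 1 - s, htv⟩ (by simp; omega) hj1 ht2 (X.δ ⟨m + 2 - s, hiv⟩ w),
            δσ_gt j ⟨m + 1 - s, htv⟩ (by simp; omega) hj1 ht2 (x ⟨m + 2 - s, hiv⟩ hik),
            ← hdd, HM]
        · -- j = i : the face we just fixed
          have hji' : j = (⟨m + 2 - s, hiv⟩ : Fin (m + 3)) := by ext; simp; omega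
          subst hji'
          exact key2 w _ (x _ hjk) ⟨m + 1 - s, htv⟩ (δσ_id _ _ (Or.inr (by simp; omega)))
  obtain ⟨w, hwf, hlo, hhi⟩ := pass2 ((m + 2) - (k : ℕ)) le_rfl
  refine ⟨w, hwf, fun i hik => ?_⟩
  have : (i : ℕ) < (k : ℕ) ∨ (k : ℕ) < (i : ℕ) := by
    rcases Nat.lt_trichotomy (i : ℕ) (k : ℕ) with h | h | h
    · exact Or.inl h
    · exact absurd (Fin.ext h) hik
    · exact Or.inr h
  rcases this with h | h
  · exact hlo i hik h
  · exact hhi i hik (by omega)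

/-- Explicit horn filling/lifting for a degreewise surjective morphism of simplicial
sets compatible with Maltsev structures: given a compatible family of `n`-dimensional
faces `x i` (`i ≠ k`) in `X` and an `(n+1)`-simplex `y` of `Y` whose faces away from
`k` are the images of the `x i`, there is an `(n+1)`-simplex `x'` of `X` lying over
`y` with `dᵢ x' = x i` for all `i ≠ k`. -/
theorem maltsev_surjective_horn_lifting
    {X Y : SSet.{u}} (mX : MaltsevStructure X) (mY : MaltsevStructure Y)
    (f : X ⟶ Y) (hcompat : MaltsevCompatible f mX mY)
    (hsurj : ∀ s : SimplexCategoryᵒᵖ, Function.Surjective (f.app s))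
    (n : ℕ) (k : Fin (n + 2)) (x : ∀ i : Fin (n + 2), i ≠ k → X _⦋n⦌)
    (hmatch : ∀ (m : ℕ) (hm : n = m + 1) (i j : Fin (n + 2))
      (hij : (i : ℕ) < (j : ℕ)) (hik : i ≠ k) (hjk : j ≠ k),
        X.δ (n := m) ⟨(i : ℕ), by omega⟩ (castDim X hm (x j hjk)) =
          X.δ (n := m) ⟨(j : ℕ) - 1, by omega⟩ (castDim X hm (x i hik)))
    (y : Y _⦋n + 1⦌)
    (hy : ∀ (i : Fin (n + 2)) (hik : i ≠ k), Y.δ i y = f.app (op ⦋n⦌) (x i hik)) :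
    ∃ x' : X _⦋n + 1⦌, f.app (op ⦋n + 1⦌) x' = y ∧
      ∀ (i : Fin (n + 2)) (hik : i ≠ k), X.δ i x' = x i hik := by
  rcases n with _ | m
  · -- n = 0 : a single face, one correction step
    obtain ⟨w, hw⟩ := hsurj (op ⦋1⦌) y
    have hkv : (k : ℕ) < 2 := k.isLt
    have h01 : 1 - (k : ℕ) < 2 := by omega
    have hik : (⟨1 - (k : ℕ), h01⟩ : Fin 2) ≠ k := Fin.ne_of_val_ne (by simp; omega)
    have fδ : ∀ (i : Fin 2) (u : X _⦋1⦌),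
        f.app (op ⦋0⦌) (X.δ i u) = Y.δ i (f.app (op ⦋1⦌) u) :=
      fun i u => FunctorToTypes.naturality f (SimplexCategory.δ i).op u
    have fσ : ∀ (u : X _⦋0⦌),
        f.app (op ⦋1⦌) (X.σ 0 u) = Y.σ 0 (f.app (op ⦋0⦌) u) :=
      fun u => FunctorToTypes.naturality f (SimplexCategory.σ 0).op u
    have hid : ∀ (b : Fin 2) (u : X _⦋0⦌), X.δ b (X.σ 0 u) = u := by
      intro b u
      have hb2 : (b : ℕ) = 0 ∨ (b : ℕ) = 1 := by omega
      rcases hb2 with h | h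
      · simpa using ConcreteCategory.congr_hom (X.δ_comp_σ_self' (i := 0) (j := b) (by ext; simpa using h)) u
      · simpa using ConcreteCategory.congr_hom (X.δ_comp_σ_succ' (i := 0) (j := b) (by ext; simpa using h)) u
    have δmalX : ∀ (j : Fin 2) (a b c : X _⦋1⦌),
        X.δ j (mX.mal _ a b c) = mX.mal _ (X.δ j a) (X.δ j b) (X.δ j c) :=
      fun j a b c => mX.natural (SimplexCategory.δ j).op a b c
    refine ⟨mX.mal _ w (X.σ 0 (X.δ ⟨1 - (k : ℕ), h01⟩ w)) (X.σ 0 (x _ hik)), ?_, ?_⟩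
    · rw [hcompat, fσ, fσ, fδ, hw, ← hy _ hik, mY.mal_right]
    · intro j hjk
      have hji : j = (⟨1 - (k : ℕ), h01⟩ : Fin 2) := by
        have := Fin.val_ne_of_ne hjk
        ext; simp; omega
      subst hji
      rw [δmalX, hid, hid, mX.mal_left]
  · -- n = m + 1 : use the core lemma
    exact maltsev_core mX mY f hcompat hsurj m k x
      (fun i j hij hik hjk h1 h2 => hmatch m rfl i j hij hik hjk) y hy
end

section
/- Let X be a simplicial set equipped with a Maltsev structure. Then X is a Kan complex: every map Λ[n,k] ⟶ X from a horn (n ≥ 1, 0 ≤ k ≤ n) extends along the inclusion Λ[n,k] ⟶ Δ[n] to a map Δ[n] ⟶ X. -/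
open CategoryTheory Simplicial SSet Opposite

universe u

namespace MaltsevKan

variable {X : SSet.{u}}

/-- The `i`-th face operator, acting on simplices. -/
def d {m : ℕ} (X : SSet.{u}) (i : Fin (m+2)) : X _⦋m+1⦌ → X _⦋m⦌ :=
  X.map (SimplexCategory.δ i).op

/-- The `i`-th degeneracy operator, acting on simplices. -/
def sg {m : ℕ} (X : SSet.{u}) (i : Fin (m+1)) : X _⦋m⦌ → X _⦋m+1⦌ :=
  X.map (SimplexCategory.σ i).op

lemma d_sg_self {m : ℕ} (i : Fin (m+1)) (z : X _⦋m⦌) :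
    d X i.castSucc (sg X i z) = z := by
  dsimp [d, sg]
  rw [← FunctorToTypes.map_comp_apply, ← op_comp, SimplexCategory.δ_comp_σ_self]
  simp

lemma d_sg_succ {m : ℕ} (i : Fin (m+1)) (z : X _⦋m⦌) :
    d X i.succ (sg X i z) = z := by
  dsimp [d, sg]
  rw [← FunctorToTypes.map_comp_apply, ← op_comp, SimplexCategory.δ_comp_σ_succ]
  simp

lemma d_sg_of_le {m : ℕ} (i : Fin (m+2)) (j : Fin (m+1)) (H : i ≤ j.castSucc) (z : X _⦋m+1⦌) :
    d X i.castSucc (sg X j.succ z) = sg X j (d X i z) := by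
  dsimp [d, sg]
  rw [← FunctorToTypes.map_comp_apply, ← op_comp, SimplexCategory.δ_comp_σ_of_le H,
    op_comp, FunctorToTypes.map_comp_apply]

lemma d_sg_of_gt {m : ℕ} (i : Fin (m+2)) (j : Fin (m+1)) (H : j.castSucc < i) (z : X _⦋m+1⦌) :
    d X i.succ (sg X j.castSucc z) = sg X j (d X i z) := by
  dsimp [d, sg]
  rw [← FunctorToTypes.map_comp_apply, ← op_comp, SimplexCategory.δ_comp_σ_of_gt H,
    op_comp, FunctorToTypes.map_comp_apply]

lemma d_d {m : ℕ} (i j : Fin (m+2)) (H : i ≤ j) (z : X _⦋m+2⦌) :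
    d X i (d X j.succ z) = d X j (d X i.castSucc z) := by
  dsimp [d]
  rw [← FunctorToTypes.map_comp_apply, ← op_comp, SimplexCategory.δ_comp_δ H,
    op_comp, FunctorToTypes.map_comp_apply]

lemma d_mal (mX : MaltsevStructure X) {m : ℕ} (i : Fin (m+2)) (a b c : X _⦋m+1⦌) :
    d X i (mX.mal _ a b c) = mX.mal _ (d X i a) (d X i b) (d X i c) :=
  mX.natural _ a b c

lemma heqI {m : ℕ} (z t : X _⦋m+1⦌) (j : Fin (m+3)) (r' : Fin (m+2))
    (hj : (j : ℕ) < (r' : ℕ))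
    (h : ∀ i : Fin (m+2), (i : ℕ) = (j : ℕ) → d X i z = d X i t) :
    d X j (sg X r' z) = d X j (sg X r' t) := by
  have hi : (j : ℕ) < m + 2 := by have := r'.isLt; omega
  set i : Fin (m+2) := ⟨j, hi⟩ with hidef
  have hr0 : 0 < (r' : ℕ) := lt_of_le_of_lt (Nat.zero_le _) hj
  set jj : Fin (m+1) := ⟨(r' : ℕ) - 1, by omega⟩ with hjjdef
  have h1 : j = i.castSucc := by ext; simp [hidef]
  have h2 : r' = jj.succ := by ext; simp [hjjdef]; omega
  have hle : i ≤ jj.castSucc := by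
    simp only [Fin.le_def, Fin.coe_castSucc, hidef, hjjdef]; omega
  rw [h1, h2, d_sg_of_le i jj hle, d_sg_of_le i jj hle, h i rfl]

lemma heqII {m : ℕ} (z t : X _⦋m+1⦌) (j : Fin (m+3)) (r' : Fin (m+2))
    (hj : (r' : ℕ) + 1 < (j : ℕ))
    (h : ∀ i : Fin (m+2), (i : ℕ) + 1 = (j : ℕ) → d X i z = d X i t) :
    d X j (sg X r' z) = d X j (sg X r' t) := by
  have hi : (j : ℕ) - 1 < m + 2 := by omega
  set i : Fin (m+2) := ⟨(j : ℕ) - 1, hi⟩ with hidef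
  have hr : (r' : ℕ) < m + 1 := by have := j.isLt; omega
  set jj : Fin (m+1) := ⟨(r' : ℕ), hr⟩ with hjjdef
  have h1 : j = i.succ := by ext; simp [hidef]; omega
  have h2 : r' = jj.castSucc := by ext; simp [hjjdef]
  have hgt : jj.castSucc < i := by
    simp only [Fin.lt_def, Fin.coe_castSucc, hidef, hjjdef]; omega
  rw [h1, h2, d_sg_of_gt i jj hgt, d_sg_of_gt i jj hgt, h i (by simp [hidef]; omega)]

/-- The basic correction step of the Maltsev filling argument. -/
lemma step (mX : MaltsevStructure X) {m : ℕ} (y : X _⦋m+2⦌) (r : Fin (m+3)) (r' : Fin (m+2))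
    (t : X _⦋m+1⦌) (hrr' : r = r'.castSucc ∨ r = r'.succ) :
    d X r (mX.mal _ y (sg X r' (d X r y)) (sg X r' t)) = t ∧
    ∀ j : Fin (m+3), d X j (sg X r' (d X r y)) = d X j (sg X r' t) →
      d X j (mX.mal _ y (sg X r' (d X r y)) (sg X r' t)) = d X j y := by
  have hcancel : ∀ z : X _⦋m+1⦌, d X r (sg X r' z) = z := by
    rcases hrr' with h | h <;> intro z <;> rw [h]
    · exact d_sg_self r' z
    · exact d_sg_succ r' z
  constructor
  · rw [d_mal, hcancel, hcancel, mX.mal_left]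
  · intro j hj
    rw [d_mal, hj, mX.mal_right]

/-- Construction of the filler from a compatible family of faces. -/
lemma fill (mX : MaltsevStructure X) (m : ℕ) (k : Fin (m+3)) (x : Fin (m+3) → X _⦋m+1⦌)
    (compat : ∀ (a b : Fin (m+2)), a ≤ b → a.castSucc ≠ k → b.succ ≠ k →
      d X a (x b.succ) = d X b (x a.castSucc)) :
    ∃ y : X _⦋m+2⦌, ∀ j, j ≠ k → d X j y = x j := by
  -- Phase 1 : fill the faces below `k`, in increasing order.
  have P1 : ∀ c : ℕ, c ≤ (k : ℕ) →
      ∃ y : X _⦋m+2⦌, ∀ j : Fin (m+3), (j : ℕ) < c → d X j y = x j := by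
    intro c
    induction c with
    | zero => exact fun _ => ⟨sg X 0 (x 0), fun j hj => absurd hj (Nat.not_lt_zero _)⟩
    | succ c ih =>
      intro hc
      obtain ⟨y, hy⟩ := ih (by omega)
      have hk2 : (k : ℕ) < m + 3 := k.isLt
      have hrlt : c < m + 3 := by omega
      set r : Fin (m+3) := ⟨c, hrlt⟩ with hrdef
      have hrk : r ≠ k := by
        refine Fin.ne_of_val_ne ?_; simp [hrdef]; omega
      have hr'lt : c < m + 2 := by omega
      set r' : Fin (m+2) := ⟨c, hr'lt⟩ with hr'def
      have hrr' : r = r'.castSucc := by ext; simp [hrdef, hr'def]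
      obtain ⟨hstep1, hstep2⟩ := step mX y r r' (x r) (Or.inl hrr')
      refine ⟨mX.mal _ y (sg X r' (d X r y)) (sg X r' (x r)), fun j hjc => ?_⟩
      rcases Nat.lt_succ_iff_lt_or_eq.mp hjc with h | h
      · refine (hstep2 j ?_).trans (hy j h)
        refine heqI _ _ _ _ (show (j : ℕ) < (r' : ℕ) from h) (fun i hi => ?_)
        have hc1 : 1 ≤ c := by omega
        have hblt : c - 1 < m + 2 := by omega
        set b : Fin (m+2) := ⟨c - 1, hblt⟩ with hbdef
        have hrb : r = b.succ := by ext; simp [hrdef, hbdef]; omega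
        have hib : i ≤ b := by simp [Fin.le_def, hbdef]; omega
        have hick : i.castSucc ≠ k := by
          refine Fin.ne_of_val_ne ?_; simp; omega
        have hbk : b.succ ≠ k := hrb ▸ hrk
        calc d X i (d X r y) = d X i (d X b.succ y) := by rw [hrb]
          _ = d X b (d X i.castSucc y) := d_d i b hib y
          _ = d X b (x i.castSucc) := by rw [hy i.castSucc (by simp; omega)]
          _ = d X i (x b.succ) := (compat i b hib hick hbk).symm
          _ = d X i (x r) := by rw [hrb]
      · have hjr : j = r := by ext; simp [hrdef, h]
        rw [hjr]; exact hstep1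
  -- Phase 2 : fill the faces above `k`, in decreasing order.
  have P2 : ∀ dc c : ℕ, c + dc = m + 3 → (k : ℕ) + 1 ≤ c →
      ∃ y : X _⦋m+2⦌, (∀ j : Fin (m+3), (j : ℕ) < (k : ℕ) → d X j y = x j) ∧
        (∀ j : Fin (m+3), c ≤ (j : ℕ) → d X j y = x j) := by
    intro dc
    induction dc with
    | zero =>
      intro c hc hkc
      obtain ⟨y, hy⟩ := P1 (k : ℕ) le_rfl
      exact ⟨y, fun j hj => hy j hj, fun j hcj => absurd j.isLt (by omega)⟩
    | succ dc ih =>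
      intro c hc hkc
      obtain ⟨y, hy1, hy2⟩ := ih (c+1) (by omega) (by omega)
      have hrlt : c < m + 3 := by omega
      set r : Fin (m+3) := ⟨c, hrlt⟩ with hrdef
      have hrk : r ≠ k := by
        refine Fin.ne_of_val_ne ?_; simp [hrdef]; omega
      have hr'lt : c - 1 < m + 2 := by omega
      set r' : Fin (m+2) := ⟨c - 1, hr'lt⟩ with hr'def
      have hrr' : r = r'.succ := by ext; simp [hrdef, hr'def]; omega
      obtain ⟨hstep1, hstep2⟩ := step mX y r r' (x r) (Or.inr hrr')
      refine ⟨mX.mal _ y (sg X r' (d X r y)) (sg X r' (x r)), fun j hjk => ?_,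
        fun j hcj => ?_⟩
      · refine (hstep2 j ?_).trans (hy1 j hjk)
        refine heqI _ _ _ _ (show (j : ℕ) < (r' : ℕ) by simp [hr'def]; omega) (fun i hi => ?_)
        have hib : i ≤ r' := by simp [Fin.le_def, hr'def]; omega
        have hick : i.castSucc ≠ k := by
          refine Fin.ne_of_val_ne ?_; simp; omega
        have hr'k : r'.succ ≠ k := hrr' ▸ hrk
        calc d X i (d X r y) = d X i (d X r'.succ y) := by rw [hrr']
          _ = d X r' (d X i.castSucc y) := d_d i r' hib y
          _ = d X r' (x i.castSucc) := by rw [hy1 i.castSucc (by simp; omega)]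
          _ = d X i (x r'.succ) := (compat i r' hib hick hr'k).symm
          _ = d X i (x r) := by rw [hrr']
      · rcases Nat.lt_or_ge (c : ℕ) (j : ℕ) with h | h
        · refine (hstep2 j ?_).trans (hy2 j (by omega))
          refine heqII _ _ _ _ (show (r' : ℕ) + 1 < (j : ℕ) by simp [hr'def]; omega)
            (fun i hi => ?_)
          have halt : c < m + 2 := by have := j.isLt; omega
          set a : Fin (m+2) := ⟨c, halt⟩ with hadef
          have hra : r = a.castSucc := by ext; simp [hrdef, hadef]
          have hai : a ≤ i := by simp [Fin.le_def, hadef]; omega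
          have hisj : i.succ = j := by ext; simp; omega
          have hak : a.castSucc ≠ k := hra ▸ hrk
          have hik : i.succ ≠ k := by
            refine Fin.ne_of_val_ne ?_; simp; omega
          calc d X i (d X r y) = d X i (d X a.castSucc y) := by rw [hra]
            _ = d X a (d X i.succ y) := (d_d a i hai y).symm
            _ = d X a (x i.succ) := by rw [hisj, hy2 j (by omega)]
            _ = d X i (x a.castSucc) := compat a i hai hak hik
            _ = d X i (x r) := by rw [hra]
        · have hjr : j = r := by ext; simp [hrdef]; omega
          rw [hjr]; exact hstep1
  obtain ⟨y, h1, h2⟩ := P2 (m + 3 - ((k : ℕ) + 1)) ((k : ℕ) + 1) (by omega) le_rfl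
  refine ⟨y, fun j hj => ?_⟩
  have hne : (j : ℕ) ≠ (k : ℕ) := fun h => hj (Fin.ext h)
  rcases Nat.lt_or_ge (j : ℕ) (k : ℕ) with h | h
  · exact h1 j h
  · exact h2 j (by omega)

end MaltsevKan

open MaltsevKan

/-- A simplicial set equipped with a Maltsev structure is a Kan complex: every
horn `Λ[n, k] ⟶ X` (with `n ≥ 1`) extends to the standard simplex `Δ[n]`. -/
theorem maltsev_is_kan_complex {X : SSet.{u}} (mX : MaltsevStructure X) :
    ∀ (n : ℕ) (k : Fin (n + 2)) (σ₀ : (Λ[n + 1, k] : SSet) ⟶ X),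
      ∃ σ : Δ[n + 1] ⟶ X, σ₀ = Λ[n + 1, k].ι ≫ σ := by
  intro n
  obtain _ | m := n
  · -- the case of `Λ[1, k]`
    intro k σ₀
    obtain ⟨j₀, hj₀⟩ : ∃ j₀ : Fin 2, j₀ ≠ k := by
      rcases Fin.exists_fin_two.mp ⟨k, rfl⟩ with h | h
      · exact ⟨1, by simp [h]⟩
      · exact ⟨0, by simp [h]⟩
    set y : X _⦋1⦌ := X.map (SimplexCategory.σ (0 : Fin 1)).op
      (σ₀.app (op ⦋0⦌) (horn.face k j₀ hj₀)) with hydef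
    refine ⟨(SSet.yonedaEquiv (X := X) (n := ⦋1⦌)).symm y, ?_⟩
    apply horn.hom_ext
    intro j hj
    have hjj₀ : j = j₀ := by
      ext
      have h1 : (j : ℕ) ≠ (k : ℕ) := fun h => hj (Fin.ext h)
      have h2 : (j₀ : ℕ) ≠ (k : ℕ) := fun h => hj₀ (Fin.ext h)
      have := j.isLt; have := j₀.isLt; have := k.isLt
      omega
    subst hjj₀
    have hr : (Λ[1, k].ι ≫ (SSet.yonedaEquiv (X := X) (n := ⦋1⦌)).symm y).app (op ⦋0⦌)
        (horn.face k j hj) = X.map (SimplexCategory.δ j).op y := rfl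
    rw [hr, hydef, ← FunctorToTypes.map_comp_apply, ← op_comp]
    have hone : SimplexCategory.δ j ≫ SimplexCategory.σ (0 : Fin 1) = 𝟙 _ := by
      rcases Fin.exists_fin_two.mp ⟨j, rfl⟩ with h | h
      · rw [h]
        exact SimplexCategory.δ_comp_σ_self (i := (0 : Fin 1))
      · rw [h]
        exact SimplexCategory.δ_comp_σ_succ (i := (0 : Fin 1))
    rw [hone, op_id, FunctorToTypes.map_id_apply]
  · -- the case of `Λ[m+2, k]`
    intro k σ₀
    obtain ⟨j₀, hj₀⟩ : ∃ j₀ : Fin (m+3), j₀ ≠ k := by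
      by_cases hk : k = 0
      · exact ⟨1, by simp [hk]⟩
      · exact ⟨0, fun h => hk h.symm⟩
    set x : Fin (m+3) → X _⦋m+1⦌ := fun j =>
      if h : j = k then σ₀.app (op ⦋m+1⦌) (horn.face k j₀ hj₀)
      else σ₀.app (op ⦋m+1⦌) (horn.face k j h) with hxdef
    have hx : ∀ j (h : j ≠ k), x j = σ₀.app (op ⦋m+1⦌) (horn.face k j h) :=
      fun j h => dif_neg h
    have compat : ∀ (a b : Fin (m+2)), a ≤ b → a.castSucc ≠ k → b.succ ≠ k →
        d X a (x b.succ) = d X b (x a.castSucc) := by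
      intro a b hab ha hb
      rw [hx _ hb, hx _ ha]
      show X.map (SimplexCategory.δ a).op _ = X.map (SimplexCategory.δ b).op _
      rw [← FunctorToTypes.naturality, ← FunctorToTypes.naturality]
      have keyeq : (Λ[m+2, k] : SSet).map (SimplexCategory.δ a).op (horn.face k b.succ hb)
          = (Λ[m+2, k] : SSet).map (SimplexCategory.δ b).op (horn.face k a.castSucc ha) := by
        apply Subtype.ext
        change (Δ[m+2] : SSet).map (SimplexCategory.δ a).op
            (stdSimplex.objEquiv.symm (SimplexCategory.δ b.succ)) =
          (Δ[m+2] : SSet).map (SimplexCategory.δ b).op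
            (stdSimplex.objEquiv.symm (SimplexCategory.δ a.castSucc))
        rw [stdSimplex.map_objEquiv_symm, stdSimplex.map_objEquiv_symm]
        dsimp only [Quiver.Hom.unop_op]
        rw [SimplexCategory.δ_comp_δ hab]
      rw [keyeq]
    obtain ⟨y, hy⟩ := fill mX m k x compat
    refine ⟨(SSet.yonedaEquiv (X := X) (n := ⦋m+2⦌)).symm y, ?_⟩
    apply horn.hom_ext
    intro j hj
    have hr : (Λ[m+2, k].ι ≫ (SSet.yonedaEquiv (X := X) (n := ⦋m+2⦌)).symm y).app (op ⦋m+1⦌)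
        (horn.face k j hj) = X.map (SimplexCategory.δ j).op y := rfl
    rw [hr]
    exact ((hy j hj).trans (hx j hj)).symm
end

section
/- Let T be a monad on the category of types admitting a Maltsev element, and let X be a simplicial object in the Eilenberg–Moore category of T-algebras. Then the underlying simplicial set of X (obtained by composing with the forgetful functor from T-algebras to types) is a Kan complex. -/
open CategoryTheory Simplicial SSet Opposite

/-- The map `Fin 3 → Fin 2` sending `0, 1 ↦ 0` and `2 ↦ 1`. -/
def maltsevG : Fin 3 → Fin 2 := ![0, 0, 1]

/-- The map `Fin 3 → Fin 2` sending `0 ↦ 0` and `1, 2 ↦ 1`. -/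
def maltsevH : Fin 3 → Fin 2 := ![0, 1, 1]

/-- A Maltsev element for a monad `T` on types: an element `p ∈ T (Fin 3)`
encoding a ternary operation `[a,b,c]` with `[a,a,b] = b` and `[a,b,b] = a`
on every Eilenberg–Moore `T`-algebra. -/
def IsMaltsevElement (T : Monad (Type)) (p : T.obj (Fin 3)) : Prop :=
  T.map (TypeCat.ofHom maltsevG) p = T.η.app (Fin 2) (1 : Fin 2) ∧
    T.map (TypeCat.ofHom maltsevH) p = T.η.app (Fin 2) (0 : Fin 2)

/-- The functor sending a simplicial object in `T`-algebras to its underlying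
simplicial set. -/
def underlyingSSet (T : Monad (Type)) :
    CategoryTheory.SimplicialObject T.Algebra ⥤ SSet :=
  (CategoryTheory.SimplicialObject.whiskering _ _).obj (Monad.forget T)

/-- The Maltsev ternary operation on a `T`-algebra induced by a Maltsev element. -/
def malOp (T : Monad (Type)) (p : T.obj (Fin 3)) (A : T.Algebra) (a b c : A.A) : A.A :=
  A.a (T.map (TypeCat.ofHom ![a, b, c]) p)

lemma malOp_left (T : Monad (Type)) (p : T.obj (Fin 3)) (hp : IsMaltsevElement T p)
    (A : T.Algebra) (a b : A.A) : malOp T p A a a b = b := by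
  have h1 : (![a, a, b] : Fin 3 → A.A) = ![a, b] ∘ maltsevG := by
    funext i; fin_cases i <;> rfl
  have h2 : T.map (TypeCat.ofHom ![a, a, b]) p = T.map (TypeCat.ofHom ![a, b]) (T.map (TypeCat.ofHom maltsevG) p) := by
    rw [h1]
    exact ConcreteCategory.congr_hom (T.map_comp (TypeCat.ofHom maltsevG) (TypeCat.ofHom ![a, b])) p
  have h3 : T.map (TypeCat.ofHom ![a, b]) (T.η.app (Fin 2) (1 : Fin 2)) = T.η.app A.A b :=
    (ConcreteCategory.congr_hom (T.η.naturality (TypeCat.ofHom ![a, b])) (1 : Fin 2)).symm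
  have h4 : A.a (T.η.app A.A b) = b := ConcreteCategory.congr_hom A.unit b
  rw [malOp, h2, hp.1, h3, h4]

lemma malOp_right (T : Monad (Type)) (p : T.obj (Fin 3)) (hp : IsMaltsevElement T p)
    (A : T.Algebra) (a b : A.A) : malOp T p A a b b = a := by
  have h1 : (![a, b, b] : Fin 3 → A.A) = ![a, b] ∘ maltsevH := by
    funext i; fin_cases i <;> rfl
  have h2 : T.map (TypeCat.ofHom ![a, b, b]) p = T.map (TypeCat.ofHom ![a, b]) (T.map (TypeCat.ofHom maltsevH) p) := by
    rw [h1]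
    exact ConcreteCategory.congr_hom (T.map_comp (TypeCat.ofHom maltsevH) (TypeCat.ofHom ![a, b])) p
  have h3 : T.map (TypeCat.ofHom ![a, b]) (T.η.app (Fin 2) (0 : Fin 2)) = T.η.app A.A a :=
    (ConcreteCategory.congr_hom (T.η.naturality (TypeCat.ofHom ![a, b])) (0 : Fin 2)).symm
  have h4 : A.a (T.η.app A.A a) = a := ConcreteCategory.congr_hom A.unit a
  rw [malOp, h2, hp.2, h3, h4]

lemma malOp_natural (T : Monad (Type)) (p : T.obj (Fin 3)) {A B : T.Algebra}
    (f : A ⟶ B) (a b c : A.A) :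
    f.f (malOp T p A a b c) = malOp T p B (f.f a) (f.f b) (f.f c) := by
  have h1 : (![f.f a, f.f b, f.f c] : Fin 3 → B.A) = f.f ∘ ![a, b, c] := by
    funext i; fin_cases i <;> rfl
  have h2 : T.map (TypeCat.ofHom ![f.f a, f.f b, f.f c]) p = T.map f.f (T.map (TypeCat.ofHom ![a, b, c]) p) := by
    rw [h1]
    exact ConcreteCategory.congr_hom (T.map_comp (TypeCat.ofHom ![a, b, c]) f.f) p
  have h3 := ConcreteCategory.congr_hom f.h (T.map (TypeCat.ofHom ![a, b, c]) p)
  dsimp [malOp]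
  rw [h2]
  exact h3.symm

open CategoryTheory Simplicial SSet Opposite

set_option maxHeartbeats 1000000 in
lemma sset_maltsev_filler (Y : SSet)
    (t : ∀ m : SimplexCategoryᵒᵖ, Y.obj m → Y.obj m → Y.obj m → Y.obj m)
    (ht1 : ∀ m a b, t m a a b = b)
    (ht2 : ∀ m a b, t m a b b = a)
    (htn : ∀ {m m' : SimplexCategoryᵒᵖ} (f : m ⟶ m') (a b c : Y.obj m),
      Y.map f (t m a b c) = t m' (Y.map f a) (Y.map f b) (Y.map f c))
    (n : ℕ) (k : Fin (n + 3)) (x : Fin (n + 3) → Y _⦋n + 1⦌)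
    (hx : ∀ (i j : Fin (n + 2)), i ≤ j → i.castSucc ≠ k → j.succ ≠ k →
      Y.δ i (x j.succ) = Y.δ j (x i.castSucc)) :
    ∃ y : Y _⦋n + 2⦌, ∀ j, j ≠ k → Y.δ j y = x j := by
  have hδσ_self : ∀ (i : Fin (n + 2)) (w : Y _⦋n + 1⦌),
      Y.δ i.castSucc (Y.σ i w) = w := fun i w => ConcreteCategory.congr_hom Y.δ_comp_σ_self w
  have hδσ_succ : ∀ (i : Fin (n + 2)) (w : Y _⦋n + 1⦌),
      Y.δ i.succ (Y.σ i w) = w := fun i w => ConcreteCategory.congr_hom Y.δ_comp_σ_succ w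
  have hδσ_le : ∀ (i : Fin (n + 2)) (j : Fin (n + 1)), i ≤ j.castSucc → ∀ (w : Y _⦋n + 1⦌),
      Y.δ i.castSucc (Y.σ j.succ w) = Y.σ j (Y.δ i w) :=
    fun i j H w => ConcreteCategory.congr_hom (Y.δ_comp_σ_of_le H) w
  have hδσ_gt : ∀ (i : Fin (n + 2)) (j : Fin (n + 1)), j.castSucc < i → ∀ (w : Y _⦋n + 1⦌),
      Y.δ i.succ (Y.σ j.castSucc w) = Y.σ j (Y.δ i w) :=
    fun i j H w => ConcreteCategory.congr_hom (Y.δ_comp_σ_of_gt H) w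
  have hδδ : ∀ (i j : Fin (n + 2)), i ≤ j → ∀ (z : Y _⦋n + 2⦌),
      Y.δ i (Y.δ j.succ z) = Y.δ j (Y.δ i.castSucc z) :=
    fun i j H z => ConcreteCategory.congr_hom (Y.δ_comp_δ H) z
  have htδ : ∀ (i : Fin (n + 3)) (a b c : Y _⦋n + 2⦌),
      Y.δ i (t _ a b c) = t _ (Y.δ i a) (Y.δ i b) (Y.δ i c) :=
    fun i a b c => htn (SimplexCategory.δ i).op a b c
  -- Phase 1: fill the faces `0, 1, ..., k-1` from below.
  have phase1 : ∀ r : ℕ, r ≤ k.val →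
      ∃ u : Y _⦋n + 2⦌, ∀ j : Fin (n + 3), j.val < r → Y.δ j u = x j := by
    intro r
    induction r with
    | zero => exact fun _ => ⟨Y.σ 0 (x 0), fun j hj => absurd hj (by omega)⟩
    | succ r ih =>
      intro hr
      obtain ⟨u, hu⟩ := ih (by omega)
      have hrn : r < n + 2 := by omega
      refine ⟨t _ u (Y.σ ⟨r, hrn⟩ (Y.δ (Fin.castSucc ⟨r, hrn⟩) u))
        (Y.σ ⟨r, hrn⟩ (x (Fin.castSucc ⟨r, hrn⟩))), fun j hj => ?_⟩
      rw [htδ]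
      rcases Nat.lt_or_ge j.val r with hjr | hjr
      · -- previously filled face
        obtain ⟨i', rfl⟩ : ∃ i' : Fin (n + 2), j = i'.castSucc :=
          ⟨⟨j.val, by omega⟩, Fin.ext rfl⟩
        have hvi : i'.val < r := hjr
        have hr1n : r - 1 < n + 1 := by omega
        have hr1n2 : r - 1 < n + 2 := by omega
        have hmc : (Fin.castSucc ⟨r, hrn⟩ : Fin (n + 3)) = (⟨r - 1, hr1n2⟩ : Fin (n + 2)).succ :=
          Fin.ext (by simp; omega)
        have hms : (⟨r, hrn⟩ : Fin (n + 2)) = (⟨r - 1, hr1n⟩ : Fin (n + 1)).succ :=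
          Fin.ext (by simp; omega)
        have hA : Y.δ i'.castSucc u = x i'.castSucc := hu _ hjr
        have hB : ∀ w : Y _⦋n + 1⦌, Y.δ i'.castSucc (Y.σ ⟨r, hrn⟩ w)
            = Y.σ ⟨r - 1, hr1n⟩ (Y.δ i' w) := by
          intro w
          rw [hms]
          exact hδσ_le i' _ (by simp [Fin.le_iff_val_le_val]; omega) w
        have hC : Y.δ i' (Y.δ (Fin.castSucc ⟨r, hrn⟩) u) = Y.δ ⟨r - 1, hr1n2⟩ (x i'.castSucc) := by
          rw [hmc, hδδ i' _ (by simp [Fin.le_iff_val_le_val]; omega), hA]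
        have hD : Y.δ i' (x (Fin.castSucc ⟨r, hrn⟩)) = Y.δ ⟨r - 1, hr1n2⟩ (x i'.castSucc) := by
          rw [hmc]
          exact hx i' ⟨r - 1, hr1n2⟩ (by simp [Fin.le_iff_val_le_val]; omega)
            (Fin.ne_of_val_ne (by omega))
            (by apply Fin.ne_of_val_ne; simp; omega)
        rw [hB, hB, hC, hD, hA, ht2]
      · -- the new face: `j.val = r`
        have hjm : j = Fin.castSucc ⟨r, hrn⟩ := Fin.ext (by simp; omega)
        subst hjm
        rw [hδσ_self, hδσ_self, ht1]
  -- Phase 2: fill the faces `n+2, n+1, ..., k+1` from above.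
  have phase2 : ∀ c : ℕ, c ≤ n + 2 - k.val →
      ∃ u : Y _⦋n + 2⦌, ∀ j : Fin (n + 3), j ≠ k →
        (j.val < k.val ∨ n + 3 - c ≤ j.val) → Y.δ j u = x j := by
    intro c
    induction c with
    | zero =>
      intro _
      obtain ⟨u, hu⟩ := phase1 k.val le_rfl
      exact ⟨u, fun j hj hj' => hu j (by omega)⟩
    | succ c ih =>
      intro hc
      obtain ⟨u, hu⟩ := ih (by omega)
      have hkc : k.val + c + 1 ≤ n + 2 := by omega
      -- the new face has index `r = n + 2 - c`
      set r : ℕ := n + 2 - c with hr_def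
      have hrk : k.val + 1 ≤ r := by omega
      have hrn3 : r < n + 3 := by omega
      have hr1n2 : r - 1 < n + 2 := by omega
      have hjr_eq : (⟨r, hrn3⟩ : Fin (n + 3)) = (⟨r - 1, hr1n2⟩ : Fin (n + 2)).succ :=
        Fin.ext (by simp; omega)
      refine ⟨t _ u (Y.σ ⟨r - 1, hr1n2⟩ (Y.δ ⟨r, hrn3⟩ u))
        (Y.σ ⟨r - 1, hr1n2⟩ (x ⟨r, hrn3⟩)), fun j hj hj' => ?_⟩
      rw [htδ]
      rcases Nat.lt_or_ge j.val r with hjlt | hjge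
      · -- `j < r`: then `j < k` (old face from phase 1)
        have hjk : j.val < k.val := by
          rcases hj' with h | h
          · exact h
          · omega
        have hk1 : 1 ≤ k.val := by omega
        have hr2 : 2 ≤ r := by omega
        obtain ⟨i', rfl⟩ : ∃ i' : Fin (n + 2), j = i'.castSucc :=
          ⟨⟨j.val, by omega⟩, Fin.ext rfl⟩
        have hvi : i'.val < k.val := hjk
        have hr2n : r - 2 < n + 1 := by omega
        have hms : (⟨r - 1, hr1n2⟩ : Fin (n + 2)) = (⟨r - 2, hr2n⟩ : Fin (n + 1)).succ :=
          Fin.ext (by simp; omega)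
        have hA : Y.δ i'.castSucc u = x i'.castSucc := hu _ hj (Or.inl hjk)
        have hB : ∀ w : Y _⦋n + 1⦌, Y.δ i'.castSucc (Y.σ ⟨r - 1, hr1n2⟩ w)
            = Y.σ ⟨r - 2, hr2n⟩ (Y.δ i' w) := by
          intro w
          rw [hms]
          exact hδσ_le i' _ (by simp [Fin.le_iff_val_le_val]; omega) w
        have hC : Y.δ i' (Y.δ ⟨r, hrn3⟩ u) = Y.δ ⟨r - 1, hr1n2⟩ (x i'.castSucc) := by
          rw [hjr_eq, hδδ i' _ (by simp [Fin.le_iff_val_le_val]; omega), hA]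
        have hD : Y.δ i' (x ⟨r, hrn3⟩) = Y.δ ⟨r - 1, hr1n2⟩ (x i'.castSucc) := by
          rw [hjr_eq]
          exact hx i' ⟨r - 1, hr1n2⟩ (by simp [Fin.le_iff_val_le_val]; omega)
            (Fin.ne_of_val_ne (by omega))
            (by rw [← hjr_eq]; exact Fin.ne_of_val_ne (by simp; omega))
        rw [hB, hB, hC, hD, hA, ht2]
      · rcases Nat.lt_or_ge r j.val with hjgt | hjle
        · -- `j > r`: old face from above
          have hrn1 : r < n + 2 := by omega
          have hr1n1 : r - 1 < n + 1 := by omega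
          obtain ⟨i', rfl⟩ : ∃ i' : Fin (n + 2), j = i'.succ :=
            ⟨⟨j.val - 1, by omega⟩, Fin.ext (by simp; omega)⟩
          have hvi : r < i'.val + 1 := by simpa using hjgt
          have hmc : (⟨r - 1, hr1n2⟩ : Fin (n + 2)) = Fin.castSucc (⟨r - 1, hr1n1⟩ : Fin (n + 1)) :=
            Fin.ext (by simp)
          have hA : Y.δ i'.succ u = x i'.succ :=
            hu _ hj (Or.inr (by simp; omega))
          have hB : ∀ w : Y _⦋n + 1⦌, Y.δ i'.succ (Y.σ ⟨r - 1, hr1n2⟩ w)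
              = Y.σ ⟨r - 1, hr1n1⟩ (Y.δ i' w) := by
            intro w
            rw [hmc]
            exact hδσ_gt i' _ (by simp [Fin.lt_iff_val_lt_val]; omega) w
          have hC : Y.δ i' (Y.δ ⟨r, hrn3⟩ u) = Y.δ ⟨r, hrn1⟩ (x i'.succ) := by
            have h1 : (⟨r, hrn3⟩ : Fin (n + 3)) = Fin.castSucc ⟨r, hrn1⟩ := Fin.ext (by simp)
            rw [h1, ← hδδ ⟨r, hrn1⟩ i' (by simp [Fin.le_iff_val_le_val]; omega), hA]
          have hD : Y.δ i' (x ⟨r, hrn3⟩) = Y.δ ⟨r, hrn1⟩ (x i'.succ) := by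
            have h1 : (⟨r, hrn3⟩ : Fin (n + 3)) = Fin.castSucc ⟨r, hrn1⟩ := Fin.ext (by simp)
            rw [h1]
            exact (hx ⟨r, hrn1⟩ i' (by simp [Fin.le_iff_val_le_val]; omega) (by
              rw [← h1]; exact Fin.ne_of_val_ne (by simp; omega)) hj).symm
          rw [hB, hB, hC, hD, hA, ht2]
        · -- `j = r`: the new face
          have hjm : j = (⟨r, hrn3⟩ : Fin (n + 3)) := Fin.ext (by simp; omega)
          subst hjm
          rw [hjr_eq, hδσ_succ, hδσ_succ, ht1]
  -- conclusion
  obtain ⟨u, hu⟩ := phase2 (n + 2 - k.val) le_rfl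
  refine ⟨u, fun j hj => hu j hj ?_⟩
  have := Fin.val_ne_of_ne hj
  omega

/-- If `T` is a monad on types admitting a Maltsev element, then the underlying
simplicial set of any simplicial object in `T`-algebras is a Kan complex. -/
theorem maltsev_monad_is_kan_complex
    (T : Monad (Type)) (p : T.obj (Fin 3)) (hp : IsMaltsevElement T p)
    (X : CategoryTheory.SimplicialObject T.Algebra) :
    ∀ (n : ℕ) (k : Fin (n + 2)) (σ₀ : (Λ[n + 1, k] : SSet) ⟶ (underlyingSSet T).obj X),
      ∃ σ : Δ[n + 1] ⟶ (underlyingSSet T).obj X,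
        σ₀ = Λ[n + 1, k].ι ≫ σ := by
  intro n k σ₀
  suffices h : ∃ y : ((underlyingSSet T).obj X) _⦋n + 1⦌, ∀ (j) (hj : j ≠ k),
      ((underlyingSSet T).obj X).δ j y = σ₀.app _ (horn.face k j hj) by
    obtain ⟨y, hy⟩ := h
    refine ⟨yonedaEquiv.symm y, ?_⟩
    apply horn.hom_ext
    intro j hj
    rw [← hy j hj, NatTrans.comp_app]
    rfl
  -- the Maltsev operation on the underlying simplicial set
  have ht1 : ∀ (m : SimplexCategoryᵒᵖ) (a b : ((underlyingSSet T).obj X).obj m),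
      malOp T p (X.obj m) a a b = b := fun m a b => malOp_left T p hp (X.obj m) a b
  have ht2 : ∀ (m : SimplexCategoryᵒᵖ) (a b : ((underlyingSSet T).obj X).obj m),
      malOp T p (X.obj m) a b b = a := fun m a b => malOp_right T p hp (X.obj m) a b
  have htn : ∀ {m m' : SimplexCategoryᵒᵖ} (f : m ⟶ m')
      (a b c : ((underlyingSSet T).obj X).obj m),
      ((underlyingSSet T).obj X).map f (malOp T p (X.obj m) a b c)
        = malOp T p (X.obj m') (((underlyingSSet T).obj X).map f a)
          (((underlyingSSet T).obj X).map f b) (((underlyingSSet T).obj X).map f c) :=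
    fun f a b c => malOp_natural T p (X.map f) a b c
  obtain _ | m := n
  · -- the 1-dimensional case
    by_cases hk : k = 0
    · subst hk
      refine ⟨((underlyingSSet T).obj X).σ 0 (σ₀.app _ (horn.face 0 1 (by decide))),
        fun j hj => ?_⟩
      have hj1 : j = 1 := by
        have h1 := Fin.val_ne_of_ne hj
        have h2 := j.isLt
        apply Fin.ext
        simp at h1 ⊢
        omega
      subst hj1
      exact ConcreteCategory.congr_hom (((underlyingSSet T).obj X).δ_comp_σ_succ'
        (show (1 : Fin 2) = Fin.succ 0 from rfl)) _
    · have hk1 : k = 1 := by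
        have h1 := Fin.val_ne_of_ne hk
        have h2 := k.isLt
        apply Fin.ext
        simp at h1 ⊢
        omega
      subst hk1
      refine ⟨((underlyingSSet T).obj X).σ 0 (σ₀.app _ (horn.face 1 0 (by decide))),
        fun j hj => ?_⟩
      have hj0 : j = 0 := by
        have h1 := Fin.val_ne_of_ne hj
        have h2 := j.isLt
        apply Fin.ext
        simp at h1 ⊢
        omega
      subst hj0
      exact ConcreteCategory.congr_hom (((underlyingSSet T).obj X).δ_comp_σ_self'
        (show (0 : Fin 2) = Fin.castSucc 0 from rfl)) _
  · -- the higher-dimensional case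
    have key : ∀ (i j : Fin (m + 2)) (H : i ≤ j) (hi : i.castSucc ≠ k) (hj : j.succ ≠ k),
        ((underlyingSSet T).obj X).δ i (σ₀.app _ (horn.face k j.succ hj))
          = ((underlyingSSet T).obj X).δ j (σ₀.app _ (horn.face k i.castSucc hi)) := by
      intro i j H hi hj
      have h1 := ConcreteCategory.congr_hom (σ₀.naturality (SimplexCategory.δ i).op) (horn.face k j.succ hj)
      have h2 := ConcreteCategory.congr_hom (σ₀.naturality (SimplexCategory.δ j).op) (horn.face k i.castSucc hi)
      have h3 : ((Λ[m + 2, k] : SSet).map (SimplexCategory.δ i).op (horn.face k j.succ hj))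
          = ((Λ[m + 2, k] : SSet).map (SimplexCategory.δ j).op (horn.face k i.castSucc hi)) := by
        apply Subtype.ext
        show Δ[m + 2].map (SimplexCategory.δ i).op
            ((stdSimplex.objEquiv).symm (SimplexCategory.δ j.succ))
          = Δ[m + 2].map (SimplexCategory.δ j).op
            ((stdSimplex.objEquiv).symm (SimplexCategory.δ i.castSucc))
        rw [stdSimplex.map_apply, stdSimplex.map_apply]
        simp only [Equiv.apply_symm_apply, Quiver.Hom.unop_op]
        rw [SimplexCategory.δ_comp_δ H]
      calc ((underlyingSSet T).obj X).δ i (σ₀.app _ (horn.face k j.succ hj))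
          = σ₀.app _ ((Λ[m + 2, k] : SSet).map (SimplexCategory.δ i).op (horn.face k j.succ hj)) :=
            h1.symm
        _ = σ₀.app _ ((Λ[m + 2, k] : SSet).map (SimplexCategory.δ j).op (horn.face k i.castSucc hi)) := by
            rw [h3]
        _ = ((underlyingSSet T).obj X).δ j (σ₀.app _ (horn.face k i.castSucc hi)) := h2
    have hj₀ : (if k = 0 then (1 : Fin (m + 3)) else 0) ≠ k := by
      split
      · rename_i h
        subst h
        exact Fin.ne_of_val_ne (by simp)
      · rename_i h
        exact fun h' => h h'.symm
    obtain ⟨y, hy⟩ := sset_maltsev_filler ((underlyingSSet T).obj X)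
      (fun m a b c => malOp T p (X.obj m) a b c) ht1 ht2 htn m k
      (fun j => if h : j = k then σ₀.app _ (horn.face k _ hj₀) else σ₀.app _ (horn.face k j h))
      (fun i j H hi hj => by
        simp only [dif_neg hj, dif_neg hi]
        exact key i j H hi hj)
    exact ⟨y, fun j hj => (hy j hj).trans (dif_neg hj)⟩
end

section
/- Let T be a monad on the category of types such that for every simplicial object X in the Eilenberg–Moore category of T-algebras the underlying simplicial set of X is a Kan complex. Then T admits a Maltsev element, i.e. there exists p ∈ T(Fin 3) with T(g)(p) = η(1) and T(h)(p) = η(0), where g : Fin 3 → Fin 2 sends 0,1 ↦ 0 and 2 ↦ 1, h : Fin 3 → Fin 2 sends 0 ↦ 0 and 1,2 ↦ 1, and η is the unit of T. -/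
open CategoryTheory Simplicial SSet Opposite

/-! ### Auxiliary constructions

We apply the Kan condition to the outer horn `Λ[2,0]` of the levelwise free
simplicial `T`-algebra on the simplicial set `Δ[1]`. -/

/-- The levelwise free simplicial `T`-algebra on `Δ[1]`. -/
def freeInterval (T : Monad (Type)) : CategoryTheory.SimplicialObject T.Algebra :=
  ((CategoryTheory.SimplicialObject.whiskering _ _).obj T.free).obj Δ[1]

/-- The (non-monotone!) map `Fin 3 → Fin 2` used to define a horn `Λ[2,0] ⟶ Δ[1]`
which does not extend to `Δ[2]`. -/
def rho : Fin 3 → Fin 2 := ![0, 1, 0]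

lemma rho_zero : ∀ v : Fin 3, v ≠ 1 → rho v = 0 := by decide
lemma rho_mono : ∀ v w : Fin 3, v ≤ w → v ≠ 2 → w ≠ 2 → rho v ≤ rho w := by decide

/-- The components of the horn map `Λ[2,0] ⟶ Δ[1]`. -/
def lamfun (m : SimplexCategoryᵒᵖ) (x : (Λ[2, 0] : SSet).obj m) : Δ[1].obj m :=
  stdSimplex.objMk ⟨rho ∘ (stdSimplex.asOrderHom x.1), by
    have hx : Set.range (stdSimplex.asOrderHom x.1) ∪ {0} ≠ Set.univ := x.2
    have hor : ¬((1 : Fin 3) ∈ Set.range (stdSimplex.asOrderHom x.1) ∧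
        (2 : Fin 3) ∈ Set.range (stdSimplex.asOrderHom x.1)) := by
      rintro ⟨h1, h2⟩
      apply hx
      rw [Set.eq_univ_iff_forall]
      intro j
      fin_cases j
      · exact Or.inr rfl
      · exact Or.inl h1
      · exact Or.inl h2
    intro a b hab
    rcases not_and_or.mp hor with h | h
    · simp only [Function.comp_apply]
      rw [rho_zero _ (fun hc => h ⟨a, hc⟩), rho_zero _ (fun hc => h ⟨b, hc⟩)]
    · exact rho_mono _ _ ((stdSimplex.asOrderHom x.1).monotone hab)
        (fun hc => h ⟨a, hc⟩) (fun hc => h ⟨b, hc⟩)⟩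

/-- The horn `Λ[2,0] ⟶ Δ[1]` given on a simplex `x` by postcomposition with `rho`
(which is monotone on simplices lying in the horn).  It does not extend to `Δ[2]`. -/
def lam : (Λ[2, 0] : SSet) ⟶ Δ[1] where
  app m := TypeCat.ofHom (lamfun m)
  naturality m m' f := by
    ext x
    rfl

/-- The horn in the underlying simplicial set of the free simplicial `T`-algebra,
obtained by composing `lam` with the unit of the monad. -/
def sig0 (T : Monad (Type)) : (Λ[2, 0] : SSet) ⟶ (underlyingSSet T).obj (freeInterval T) where
  app m := TypeCat.ofHom fun x => T.η.app (Δ[1].obj m) (lam.app m x)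
  naturality m m' f := by
    ext x
    have h1 := NatTrans.naturality_apply lam f x
    have h2 := ConcreteCategory.congr_hom (T.η.naturality (Δ[1].map f)) (lam.app m x)
    simp only [types_comp_apply, Functor.id_map] at h2
    show T.η.app (Δ[1].obj m') (lam.app m' ((Λ[2, 0] : SSet).map f x)) =
      T.map (Δ[1].map f) (T.η.app (Δ[1].obj m) (lam.app m x))
    rw [h1, ← h2]

/-- Packaging of two elements of `Fin 2` into an element of `Fin 3` via addition. -/
def finSum (a b : Fin 2) : Fin 3 := ⟨a + b, by omega⟩

lemma finSum_G : ∀ a b : Fin 2, a ≤ b → maltsevG (finSum a b) = a := by decide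
lemma finSum_H : ∀ a b : Fin 2, a ≤ b → maltsevH (finSum a b) = b := by decide

/-- The classifying map on 2-simplices of `Δ[1]`, sending a monotone map
`x : [2] → [1]` to `x 1 + x 2 : Fin 3`. -/
def ff (x : Δ[1].obj (op ⦋2⦌)) : Fin 3 := finSum (stdSimplex.asOrderHom x 1) (stdSimplex.asOrderHom x 2)

/-- Evaluation of a 1-simplex of `Δ[1]` at the vertex `1`. -/
def uu (y : Δ[1].obj (op ⦋1⦌)) : Fin 2 := stdSimplex.asOrderHom y 1

/-- The face map on simplices of `Δ[1]`. -/
def dd (i : Fin 3) : Δ[1].obj (op ⦋2⦌) → Δ[1].obj (op ⦋1⦌) :=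
  ⇑(Δ[1].map (SimplexCategory.δ i).op)

lemma keyG : maltsevG ∘ ff = uu ∘ dd 2 := by
  funext x
  have hm : stdSimplex.asOrderHom x 1 ≤ stdSimplex.asOrderHom x 2 := (stdSimplex.asOrderHom x).monotone (by decide)
  show maltsevG (ff x) = uu (dd 2 x)
  rw [ff, finSum_G _ _ hm]
  rfl

lemma keyH : maltsevH ∘ ff = uu ∘ dd 1 := by
  funext x
  have hm : stdSimplex.asOrderHom x 1 ≤ stdSimplex.asOrderHom x 2 := (stdSimplex.asOrderHom x).monotone (by decide)
  show maltsevH (ff x) = uu (dd 1 x)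
  rw [ff, finSum_H _ _ hm]
  rfl

/-- The `i`-th face of the standard 2-simplex, as a 1-simplex of the horn `Λ[2,0]`. -/
def ee (i : Fin 3)
    (hi : ∃ w : Fin 3, w ≠ 0 ∧ ∀ j : Fin 2, (SimplexCategory.δ i).toOrderHom j ≠ w) :
    (Λ[2, 0] : SSet).obj (op ⦋1⦌) :=
  ⟨Δ[2].map (SimplexCategory.δ i).op (stdSimplex.objMk OrderHom.id), by
    obtain ⟨w, hw0, hw⟩ := hi
    intro h
    rw [Set.eq_univ_iff_forall] at h
    rcases h w with ⟨j, hj⟩ | h0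
    · exact hw j hj
    · exact hw0 h0⟩

lemma he2 : ∃ w : Fin 3, w ≠ 0 ∧ ∀ j : Fin 2, (SimplexCategory.δ (2:Fin 3)).toOrderHom j ≠ w :=
  ⟨2, by decide, by decide⟩

lemma he1 : ∃ w : Fin 3, w ≠ 0 ∧ ∀ j : Fin 2, (SimplexCategory.δ (1:Fin 3)).toOrderHom j ≠ w :=
  ⟨1, by decide, by decide⟩

lemma uu_lam_e2 : uu (lam.app (op ⦋1⦌) (ee 2 he2)) = 1 := rfl
lemma uu_lam_e1 : uu (lam.app (op ⦋1⦌) (ee 1 he1)) = 0 := rfl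

/-- If the underlying simplicial set of every simplicial object in `T`-algebras
is a Kan complex, then the monad `T` admits a Maltsev element. -/
theorem kan_implies_maltsev_element
    (T : Monad (Type))
    (hkan : ∀ (X : CategoryTheory.SimplicialObject T.Algebra)
      (n : ℕ) (k : Fin (n + 2)) (σ₀ : (Λ[n + 1, k] : SSet) ⟶ (underlyingSSet T).obj X),
        ∃ σ : Δ[n + 1] ⟶ (underlyingSSet T).obj X,
          σ₀ = Λ[n + 1, k].ι ≫ σ) :
    ∃ p : T.obj (Fin 3), IsMaltsevElement T p := by
  obtain ⟨σ, hσ⟩ := hkan (freeInterval T) 1 0 (sig0 T)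
  let q : T.obj (Δ[1].obj (op ⦋2⦌)) := σ.app (op ⦋2⦌) (stdSimplex.objMk OrderHom.id)
  refine ⟨T.map (TypeCat.ofHom ff) q, ?_, ?_⟩
  · -- the `maltsevG` condition
    have step1 : T.map (TypeCat.ofHom maltsevG) (T.map (TypeCat.ofHom ff) q) = T.map (TypeCat.ofHom (uu ∘ dd 2)) q := by
      rw [← types_comp_apply (T.map (TypeCat.ofHom ff)) (T.map (TypeCat.ofHom maltsevG)), ← T.map_comp]
      exact congrArg (fun f => T.map (TypeCat.ofHom f) q) keyG
    have step2 : T.map (TypeCat.ofHom (uu ∘ dd 2)) q = T.map (TypeCat.ofHom uu) (T.map (TypeCat.ofHom (dd 2)) q) :=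
      ConcreteCategory.congr_hom (T.map_comp (TypeCat.ofHom (dd 2)) (TypeCat.ofHom uu)) q
    have step3 : T.map (TypeCat.ofHom (dd 2)) q = T.η.app (Δ[1].obj (op ⦋1⦌)) (lam.app (op ⦋1⦌) (ee 2 he2)) := by
      have hnat := NatTrans.naturality_apply σ
        (SimplexCategory.δ (2:Fin 3)).op (stdSimplex.objMk OrderHom.id)
      have h : T.map (TypeCat.ofHom (dd 2)) q = σ.app (op ⦋1⦌) ((ee 2 he2).1) := hnat.symm
      rw [h]
      exact (ConcreteCategory.congr_hom (congr_app hσ (op ⦋1⦌)) (ee 2 he2)).symm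
    rw [step1, step2, step3]
    have hη := ConcreteCategory.congr_hom (T.η.naturality (TypeCat.ofHom uu)) (lam.app (op ⦋1⦌) (ee 2 he2))
    simp only [types_comp_apply, Functor.id_map, TypeCat.ofHom_apply] at hη
    rw [← hη, uu_lam_e2]
  · -- the `maltsevH` condition
    have step1 : T.map (TypeCat.ofHom maltsevH) (T.map (TypeCat.ofHom ff) q) = T.map (TypeCat.ofHom (uu ∘ dd 1)) q := by
      rw [← types_comp_apply (T.map (TypeCat.ofHom ff)) (T.map (TypeCat.ofHom maltsevH)), ← T.map_comp]
      exact congrArg (fun f => T.map (TypeCat.ofHom f) q) keyH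
    have step2 : T.map (TypeCat.ofHom (uu ∘ dd 1)) q = T.map (TypeCat.ofHom uu) (T.map (TypeCat.ofHom (dd 1)) q) :=
      ConcreteCategory.congr_hom (T.map_comp (TypeCat.ofHom (dd 1)) (TypeCat.ofHom uu)) q
    have step3 : T.map (TypeCat.ofHom (dd 1)) q = T.η.app (Δ[1].obj (op ⦋1⦌)) (lam.app (op ⦋1⦌) (ee 1 he1)) := by
      have hnat := NatTrans.naturality_apply σ
        (SimplexCategory.δ (1:Fin 3)).op (stdSimplex.objMk OrderHom.id)
      have h : T.map (TypeCat.ofHom (dd 1)) q = σ.app (op ⦋1⦌) ((ee 1 he1).1) := hnat.symm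
      rw [h]
      exact (ConcreteCategory.congr_hom (congr_app hσ (op ⦋1⦌)) (ee 1 he1)).symm
    rw [step1, step2, step3]
    have hη := ConcreteCategory.congr_hom (T.η.naturality (TypeCat.ofHom uu)) (lam.app (op ⦋1⦌) (ee 1 he1))
    simp only [types_comp_apply, Functor.id_map, TypeCat.ofHom_apply] at hη
    rw [← hη, uu_lam_e1]
end

section
/- Let T be a monad on the category of types and let S¹_T denote the simplicial set obtained by applying the underlying endofunctor of T degreewise to the simplicial circle S¹ = Δ[1]/∂Δ[1]. Suppose S¹_T satisfies the (1,2)-th Kan condition in dimension 2: for all 1-simplices x₁, x₂ of S¹_T with d₁x₁ = d₁x₂ there exists a 2-simplex x of S¹_T with d₁x = x₁ and d₂x = x₂. Then T admits a Maltsev element, i.e. there exists p ∈ T(Fin 3) with T(g)(p) = η(1) and T(h)(p) = η(0), where g : Fin 3 → Fin 2 sends 0,1 ↦ 0 and 2 ↦ 1, h : Fin 3 → Fin 2 sends 0 ↦ 0 and 1,2 ↦ 1, and η is the unit of T. -/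
open CategoryTheory Simplicial SSet Opposite Limits

/-- The unique map `∂Δ[1] ⟶ Δ[0]`. -/
def boundaryToPoint : (∂Δ[1] : SSet) ⟶ Δ[0] where
  app m := TypeCat.ofHom fun _ => SSet.stdSimplex.const 0 0 m
  naturality _ t _ := by
    ext
    exact SSet.stdSimplex.objEquiv.injective (Subsingleton.elim _ _)

/-- The simplicial circle `S¹ = Δ[1]/∂Δ[1]`, i.e. the pushout of the boundary
inclusion `∂Δ[1] ⟶ Δ[1]` along the unique map `∂Δ[1] ⟶ Δ[0]`. -/
noncomputable def simplicialCircle : SSet :=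
  pushout ((∂Δ[1]).ι) boundaryToPoint

/-- The simplicial set obtained by applying the underlying endofunctor of the
monad `T` degreewise to the simplicial circle. -/
noncomputable def circleT (T : Monad (Type)) : SSet :=
  (simplicialCircle : SimplexCategoryᵒᵖ ⥤ Type) ⋙ T.toFunctor

namespace CircleMaltsevAux

noncomputable abbrev X : SSet := nerve (SingleObj ℕ)
abbrev CA1 := ComposableArrows (SingleObj ℕ) 1
abbrev CA2 := ComposableArrows (SingleObj ℕ) 2

noncomputable def x0 : X _⦋0⦌ := ComposableArrows.mk₀ (SingleObj.star ℕ)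

instance : Subsingleton (X _⦋0⦌) :=
  ⟨fun _ _ => ComposableArrows.ext₀ (Subsingleton.elim _ _)⟩

noncomputable def tau : X _⦋1⦌ :=
  ComposableArrows.mk₁ (show SingleObj.star ℕ ⟶ SingleObj.star ℕ from (2 : ℕ))

noncomputable def leg : (Δ[1] : SSet) ⟶ X := SSet.yonedaEquiv.symm tau
noncomputable def leg0 : (Δ[0] : SSet) ⟶ X := SSet.yonedaEquiv.symm x0

lemma sq : (∂Δ[1]).ι ≫ leg = boundaryToPoint ≫ leg0 := by
  apply SSet.hom_ext
  intro m
  ext a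
  obtain ⟨f, hf⟩ := a
  change ¬ Function.Surjective _ at hf
  rw [Function.Surjective] at hf
  push_neg at hf
  obtain ⟨y, hy⟩ := hf
  set fd : m.unop ⟶ SimplexCategory.mk 1 := (SSet.stdSimplex.objEquiv f) with hfd
  have key : ∀ (a b y : Fin 2), a ≠ y → b ≠ y → a = b := by decide
  have hconst : ∀ i, fd.toOrderHom i = fd.toOrderHom 0 := fun i =>
    key _ _ y (hy i) (hy 0)
  set c0 : m.unop ⟶ SimplexCategory.mk 0 :=
    SimplexCategory.Hom.mk (OrderHom.const _ 0) with hc0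
  set c1 : SimplexCategory.mk 0 ⟶ SimplexCategory.mk 1 :=
    SimplexCategory.Hom.mk (OrderHom.const _ (fd.toOrderHom 0)) with hc1
  have hfac : fd = c0 ≫ c1 := by
    apply SimplexCategory.Hom.ext
    apply OrderHom.ext
    funext i
    exact hconst i
  have hL : ((∂Δ[1]).ι ≫ leg).app m ⟨f, hf⟩ = X.map fd.op tau := rfl
  have hR : (boundaryToPoint ≫ leg0).app m ⟨f, hf⟩ = X.map c0.op x0 := rfl
  show ((∂Δ[1]).ι ≫ leg).app m ⟨f, hf⟩ = (boundaryToPoint ≫ leg0).app m ⟨f, hf⟩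
  rw [hL, hR, hfac, op_comp, FunctorToTypes.map_comp_apply]
  exact congrArg (X.map _) (Subsingleton.elim _ _)

noncomputable def F : (simplicialCircle : SSet) ⟶ X :=
  pushout.desc leg leg0 sq

lemma inl_F : pushout.inl ((∂Δ[1]).ι) boundaryToPoint ≫ F = leg :=
  pushout.inl_desc _ _ _

noncomputable def sigmaEl : simplicialCircle.obj (op ⦋1⦌) :=
  (pushout.inl ((∂Δ[1]).ι) boundaryToPoint).app (op ⦋1⦌)
    ((SSet.stdSimplex.objEquiv.symm (𝟙 ⦋1⦌) : Δ[1] _⦋1⦌))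

noncomputable def aEl : simplicialCircle.obj (op ⦋1⦌) :=
  (pushout.inl ((∂Δ[1]).ι) boundaryToPoint).app (op ⦋1⦌)
    (SSet.stdSimplex.const 1 0 (op ⦋1⦌))

lemma F_app_eq (y : (Δ[1] : SSet).obj (op ⦋1⦌)) :
    F.app (op ⦋1⦌) ((pushout.inl ((∂Δ[1]).ι) boundaryToPoint).app (op ⦋1⦌) y) =
      leg.app (op ⦋1⦌) y := by
  have := congrArg (fun (t : (Δ[1] : SSet) ⟶ X) => t.app (op ⦋1⦌) y) inl_F
  exact this

lemma F_sigma : F.app (op ⦋1⦌) sigmaEl = tau := by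
  rw [sigmaEl, F_app_eq]
  exact SSet.yonedaEquiv.apply_symm_apply tau

lemma face_eq :
    simplicialCircle.map (SimplexCategory.δ (1 : Fin 2)).op aEl =
      simplicialCircle.map (SimplexCategory.δ (1 : Fin 2)).op sigmaEl := by
  delta simplicialCircle
  rw [aEl, sigmaEl,
    ← NatTrans.naturality_apply (pushout.inl ((∂Δ[1]).ι) boundaryToPoint),
    ← NatTrans.naturality_apply (pushout.inl ((∂Δ[1]).ι) boundaryToPoint)]
  have : ((Δ[1] : SSet).map (SimplexCategory.δ (1 : Fin 2)).op
        (SSet.stdSimplex.const 1 0 (op ⦋1⦌))) =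
      (Δ[1] : SSet).map (SimplexCategory.δ (1 : Fin 2)).op ((SSet.stdSimplex.objEquiv.symm (𝟙 ⦋1⦌) : Δ[1] _⦋1⦌)) := by
    apply SSet.stdSimplex.objEquiv.injective
    apply SimplexCategory.Hom.ext
    apply OrderHom.ext
    funext i
    fin_cases i
    rfl
  rw [this]

noncomputable def psi : X.obj (op ⦋1⦌) → Fin 2 := fun f =>
  if (show ℕ from (show CA1 from f).map' 0 1) = 1 then 1 else 0

noncomputable def phi : X.obj (op ⦋2⦌) → Fin 3 := fun f =>
  if (show ℕ from (show CA2 from f).map' 0 1) = 1 then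
    (if (show ℕ from (show CA2 from f).map' 1 2) = 1 then 2 else 1) else 0

lemma psi_F_a : psi (F.app (op ⦋1⦌) aEl) = 1 := by
  rw [aEl, F_app_eq]
  rfl

lemma psi_F_sigma : psi (F.app (op ⦋1⦌) sigmaEl) = 0 := by
  rw [F_sigma]
  rfl

lemma L1 (f : X.obj (op ⦋2⦌)) : maltsevG (phi f) = psi (X.δ (1 : Fin 3) f) := by
  have hδ : (show ℕ from (show CA1 from X.δ (1 : Fin 3) f).map' 0 1) =
      (show ℕ from (show CA2 from f).map' 1 2) * (show ℕ from (show CA2 from f).map' 0 1) := by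
    show (show ℕ from (show CA2 from f).map' 0 2) = _
    rw [(show CA2 from f).map'_comp 0 1 2, SingleObj.comp_as_mul]
  unfold psi phi
  rw [hδ]
  set a := (show ℕ from (show CA2 from f).map' 0 1)
  set b := (show ℕ from (show CA2 from f).map' 1 2)
  by_cases ha : a = 1 <;> by_cases hb : b = 1 <;>
    simp [ha, hb, mul_eq_one, maltsevG]

lemma L2 (f : X.obj (op ⦋2⦌)) : maltsevH (phi f) = psi (X.δ (2 : Fin 3) f) := by
  have hδ : (show ℕ from (show CA1 from X.δ (2 : Fin 3) f).map' 0 1) =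
      (show ℕ from (show CA2 from f).map' 0 1) := rfl
  unfold psi phi
  rw [hδ]
  set a := (show ℕ from (show CA2 from f).map' 0 1)
  by_cases ha : a = 1 <;>
    by_cases hb : (show ℕ from (show CA2 from f).map' 1 2) = 1 <;>
      simp [ha, hb, maltsevH]

end CircleMaltsevAux

open CircleMaltsevAux in
/-- If `T` applied degreewise to the simplicial circle satisfies the `(1,2)`-th Kan
condition in dimension `2`, then `T` admits a Maltsev element. -/
theorem circle_kan_condition_implies_maltsev
    (T : Monad (Type))
    (hfill : ∀ x₁ x₂ : (circleT T) _⦋1⦌,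
      (circleT T).δ (1 : Fin 2) x₁ = (circleT T).δ (1 : Fin 2) x₂ →
        ∃ x : (circleT T) _⦋2⦌,
          (circleT T).δ (1 : Fin 3) x = x₁ ∧ (circleT T).δ (2 : Fin 3) x = x₂) :
    ∃ p : T.obj (Fin 3), IsMaltsevElement T p := by
  have eta_nat : ∀ {α β : Type} (f : α ⟶ β) (a : α),
      T.map f (T.η.app α a) = T.η.app β (f a) := by
    intro α β f a
    have := NatTrans.naturality_apply T.η f a
    simpa using this.symm
  obtain ⟨x, hx1, hx2⟩ := hfill (T.η.app _ aEl) (T.η.app _ sigmaEl) (by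
    show T.map (simplicialCircle.map (SimplexCategory.δ (1 : Fin 2)).op) (T.η.app _ aEl) =
      T.map (simplicialCircle.map (SimplexCategory.δ (1 : Fin 2)).op) (T.η.app _ sigmaEl)
    rw [eta_nat, eta_nat, face_eq])
  refine ⟨T.map (F.app (op ⦋2⦌) ≫ TypeCat.ofHom phi) x, ?_, ?_⟩
  · show T.map (TypeCat.ofHom maltsevG) (T.map (F.app (op ⦋2⦌) ≫ TypeCat.ofHom phi) x) = _
    refine (FunctorToTypes.map_comp_apply T.toFunctor _ _ x).symm.trans ?_
    have hcomp : (F.app (op ⦋2⦌) ≫ TypeCat.ofHom phi) ≫ TypeCat.ofHom maltsevG =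
        simplicialCircle.map (SimplexCategory.δ (1 : Fin 3)).op ≫ (F.app (op ⦋1⦌) ≫ TypeCat.ofHom psi) := by
      refine ConcreteCategory.hom_ext _ _ fun c => ?_
      show maltsevG (phi (F.app (op ⦋2⦌) c)) =
        psi (F.app (op ⦋1⦌) (simplicialCircle.map (SimplexCategory.δ (1 : Fin 3)).op c))
      rw [L1]
      congr 1
      exact (NatTrans.naturality_apply F (SimplexCategory.δ (1 : Fin 3)).op c).symm
    rw [hcomp]
    refine (FunctorToTypes.map_comp_apply T.toFunctor _ _ x).trans ?_
    have : T.map (simplicialCircle.map (SimplexCategory.δ (1 : Fin 3)).op) x = T.η.app _ aEl := hx1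
    rw [this, eta_nat]
    exact congrArg (T.η.app (Fin 2)) psi_F_a
  · show T.map (TypeCat.ofHom maltsevH) (T.map (F.app (op ⦋2⦌) ≫ TypeCat.ofHom phi) x) = _
    refine (FunctorToTypes.map_comp_apply T.toFunctor _ _ x).symm.trans ?_
    have hcomp : (F.app (op ⦋2⦌) ≫ TypeCat.ofHom phi) ≫ TypeCat.ofHom maltsevH =
        simplicialCircle.map (SimplexCategory.δ (2 : Fin 3)).op ≫ (F.app (op ⦋1⦌) ≫ TypeCat.ofHom psi) := by
      refine ConcreteCategory.hom_ext _ _ fun c => ?_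
      show maltsevH (phi (F.app (op ⦋2⦌) c)) =
        psi (F.app (op ⦋1⦌) (simplicialCircle.map (SimplexCategory.δ (2 : Fin 3)).op c))
      rw [L2]
      congr 1
      exact (NatTrans.naturality_apply F (SimplexCategory.δ (2 : Fin 3)).op c).symm
    rw [hcomp]
    refine (FunctorToTypes.map_comp_apply T.toFunctor _ _ x).trans ?_
    have : T.map (simplicialCircle.map (SimplexCategory.δ (2 : Fin 3)).op) x = T.η.app _ sigmaEl := hx2
    rw [this, eta_nat]
    exact congrArg (T.η.app (Fin 2)) psi_F_sigma
end

section
/- (Upward step of the filler construction.) Let X and Y be simplicial sets equipped with Maltsev structures m^X, m^Y, and let f : X ⟶ Y be a morphism of simplicial sets compatible with the Maltsev structures. Fix n ≥ 1, y ∈ Y_n, and 0 ≤ j ≤ n-1. Suppose w ∈ X_n satisfies f_n(w) = y, and x_j ∈ X_{n-1} satisfies f_{n-1}(x_j) = d_j y. Set w' := m^X_n(w, s_j d_j w, s_j x_j). Then: (i) f_n(w') = y; (ii) d_j w' = x_j; and (iii) for every i < j and every x_i ∈ X_{n-1}, if d_i w = x_i and d_i x_j = d_{j-1} x_i, then d_i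 w' = x_i. -/
open CategoryTheory Simplicial SSet Opposite

universe u

/-- Upward step of the filler construction: if `f w = y` and `f xj = dⱼ y`, then
`w' = m (w, sⱼ dⱼ w, sⱼ xj)` still lies over `y`, has `dⱼ w' = xj`, and retains
all faces `dᵢ w = xᵢ` for `i < j` provided `dᵢ xj = d_{j-1} xᵢ`. -/
theorem maltsev_filler_upward_step
    {X Y : SSet.{u}} (mX : MaltsevStructure X) (mY : MaltsevStructure Y)
    (f : X ⟶ Y) (hcompat : MaltsevCompatible f mX mY)
    (n : ℕ) (y : Y _⦋n + 1⦌) (j : Fin (n + 1))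
    (w : X _⦋n + 1⦌) (hw : f.app (op ⦋n + 1⦌) w = y)
    (xj : X _⦋n⦌) (hxj : f.app (op ⦋n⦌) xj = Y.δ j.castSucc y) :
    f.app (op ⦋n + 1⦌) (mX.mal (op ⦋n + 1⦌) w (X.σ j (X.δ j.castSucc w)) (X.σ j xj)) = y ∧
    X.δ j.castSucc (mX.mal (op ⦋n + 1⦌) w (X.σ j (X.δ j.castSucc w)) (X.σ j xj)) = xj ∧
    ∀ (l : ℕ) (hl : n = l + 1) (i : Fin (n + 2)) (hij : (i : ℕ) < (j : ℕ)) (xi : X _⦋n⦌),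
      X.δ i w = xi →
      X.δ (n := l) ⟨(i : ℕ), by omega⟩ (castDim X hl xj) =
        X.δ (n := l) ⟨(j : ℕ) - 1, by omega⟩ (castDim X hl xi) →
      X.δ i (mX.mal (op ⦋n + 1⦌) w (X.σ j (X.δ j.castSucc w)) (X.σ j xj)) = xi := by

  have fδ : ∀ {m : ℕ} (i : Fin (m + 2)) (x : X _⦋m + 1⦌),
      f.app (op ⦋m⦌) (X.δ i x) = Y.δ i (f.app (op ⦋m + 1⦌) x) := fun i x =>
    FunctorToTypes.naturality f _ x
  have fσ : ∀ {m : ℕ} (i : Fin (m + 1)) (x : X _⦋m⦌),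
      f.app (op ⦋m + 1⦌) (X.σ i x) = Y.σ i (f.app (op ⦋m⦌) x) := fun i x =>
    FunctorToTypes.naturality f _ x
  have δσX : ∀ {m : ℕ} (i : Fin (m + 1)) (x : X _⦋m⦌),
      X.δ i.castSucc (X.σ i x) = x := fun i x =>
    ConcreteCategory.congr_hom (X.δ_comp_σ_self) x
  have δσY : ∀ {m : ℕ} (i : Fin (m + 1)) (x : Y _⦋m⦌),
      Y.δ i.castSucc (Y.σ i x) = x := fun i x =>
    ConcreteCategory.congr_hom (Y.δ_comp_σ_self) x
  have δmal : ∀ {m : ℕ} (i : Fin (m + 2)) (a b c : X _⦋m + 1⦌),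
      X.δ i (mX.mal (op ⦋m + 1⦌) a b c)
        = mX.mal (op ⦋m⦌) (X.δ i a) (X.δ i b) (X.δ i c) := fun i a b c =>
    mX.natural _ a b c
  refine ⟨?_, ?_, ?_⟩
  · rw [hcompat, fσ, fσ, fδ, hw, hxj]
    exact mY.mal_right _ _ _
  · rw [δmal, δσX, δσX]
    exact mX.mal_left _ _ _
  · intro l hl i hij xi hxi hface
    subst hl
    have hc : ∀ x : X _⦋l + 1⦌, castDim X rfl x = x := fun _ => rfl
    rw [hc, hc] at hface
    set i' : Fin (l + 2) := ⟨(i : ℕ), by omega⟩ with hi'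
    set j' : Fin (l + 1) := ⟨(j : ℕ) - 1, by omega⟩ with hj'
    have hji : (1 : ℕ) ≤ (j : ℕ) := by omega
    have hj : j = j'.succ := by
      apply Fin.ext
      simp [hj', Fin.val_succ]
      omega
    have hi : i = i'.castSucc := by
      apply Fin.ext
      rfl
    have hb : j'.succ.castSucc = (j'.castSucc).succ := by
      apply Fin.ext
      rfl
    have δσle : ∀ (v : X _⦋l + 1⦌), X.δ i'.castSucc (X.σ j'.succ v) = X.σ j' (X.δ i' v) :=
      fun v => ConcreteCategory.congr_hom (X.δ_comp_σ_of_le (i := i') (j := j') (by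
        simp [hi', hj', Fin.le_def]; omega)) v
    have δδ : ∀ (v : X _⦋l + 2⦌), X.δ i' (X.δ (j'.castSucc).succ v)
        = X.δ j'.castSucc (X.δ i'.castSucc v) :=
      fun v => ConcreteCategory.congr_hom (X.δ_comp_δ (i := i') (j := j'.castSucc) (by
        simp [hi', hj', Fin.le_def]; omega)) v
    have hface' : X.δ i' xj = X.δ j'.castSucc xi := hface
    rw [hi, hj, δmal, δσle, δσle, hb, δδ, ← hi, hxi, ← hface']
    exact mX.mal_right _ _ _
end

section
/- (Downward step of the filler construction.) Let X and Y be simplicial sets equipped with Maltsev structures m^X, m^Y, and let f : X ⟶ Y be a morphism of simplicial sets compatible with the Maltsev structures. Fix n ≥ 1, y ∈ Y_n, and 1 ≤ j ≤ n. Suppose w ∈ X_n satisfies f_n(w) = y, and x_j ∈ X_{n-1} satisfies f_{n-1}(x_j) = d_j y. Set w' := m^X_n(w, s_{j-1} d_j w, s_{j-1} x_j). Then: (i) f_n(w') = y; (ii) d_j w' = x_j; (iii) for every i < j - 1 and every x_i ∈ X_{n-1}, if d_i w = x_i and d_i x_j = d_{j-1} x_i, then d_i w' = x_i; and (iv) for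 every i with j < i ≤ n and every x_i ∈ X_{n-1}, if d_i w = x_i and d_j x_i = d_{i-1} x_j, then d_i w' = x_i. -/
open CategoryTheory Simplicial SSet Opposite

universe u

set_option maxHeartbeats 1600000

/-- Downward step of the filler construction: if `f w = y` and `f xj = dⱼ y`
(with `1 ≤ j`), then `w' = m (w, s_{j-1} dⱼ w, s_{j-1} xj)` still lies over `y`,
has `dⱼ w' = xj`, retains all faces `dᵢ w = xᵢ` for `i < j - 1` provided
`dᵢ xj = d_{j-1} xᵢ`, and retains all faces `dᵢ w = xᵢ` for `j < i` provided
`dⱼ xᵢ = d_{i-1} xj`. -/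
theorem maltsev_filler_downward_step
    {X Y : SSet.{u}} (mX : MaltsevStructure X) (mY : MaltsevStructure Y)
    (f : X ⟶ Y) (hcompat : MaltsevCompatible f mX mY)
    (n : ℕ) (y : Y _⦋n + 1⦌) (j : Fin (n + 2)) (hj : 1 ≤ (j : ℕ))
    (w : X _⦋n + 1⦌) (hw : f.app (op ⦋n + 1⦌) w = y)
    (xj : X _⦋n⦌) (hxj : f.app (op ⦋n⦌) xj = Y.δ j y) :
    f.app (op ⦋n + 1⦌) (mX.mal (op ⦋n + 1⦌) w
      (X.σ ⟨(j : ℕ) - 1, by omega⟩ (X.δ j w)) (X.σ ⟨(j : ℕ) - 1, by omega⟩ xj)) = y ∧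
    X.δ j (mX.mal (op ⦋n + 1⦌) w
      (X.σ ⟨(j : ℕ) - 1, by omega⟩ (X.δ j w)) (X.σ ⟨(j : ℕ) - 1, by omega⟩ xj)) = xj ∧
    (∀ (l : ℕ) (hl : n = l + 1) (i : Fin (n + 2)) (hij : (i : ℕ) < (j : ℕ) - 1)
      (xi : X _⦋n⦌),
        X.δ i w = xi →
        X.δ (n := l) ⟨(i : ℕ), by omega⟩ (castDim X hl xj) =
          X.δ (n := l) ⟨(j : ℕ) - 1, by omega⟩ (castDim X hl xi) →
        X.δ i (mX.mal (op ⦋n + 1⦌) w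
          (X.σ ⟨(j : ℕ) - 1, by omega⟩ (X.δ j w)) (X.σ ⟨(j : ℕ) - 1, by omega⟩ xj)) = xi) ∧
    (∀ (l : ℕ) (hl : n = l + 1) (i : Fin (n + 2)) (hji : (j : ℕ) < (i : ℕ))
      (xi : X _⦋n⦌),
        X.δ i w = xi →
        X.δ (n := l) ⟨(j : ℕ), by omega⟩ (castDim X hl xi) =
          X.δ (n := l) ⟨(i : ℕ) - 1, by omega⟩ (castDim X hl xj) →
        X.δ i (mX.mal (op ⦋n + 1⦌) w
          (X.σ ⟨(j : ℕ) - 1, by omega⟩ (X.δ j w)) (X.σ ⟨(j : ℕ) - 1, by omega⟩ xj)) = xi) := by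
  have fnat : ∀ {s t : SimplexCategoryᵒᵖ} (g : s ⟶ t) (x : X.obj s),
      f.app t (X.map g x) = Y.map g (f.app s x) := fun g x => FunctorToTypes.naturality (φ := f) (f := g) (x := x)
  have fσ : ∀ (m : ℕ) (k : Fin (m + 1)) (x : X _⦋m⦌),
      f.app (op ⦋m + 1⦌) (X.σ k x) = Y.σ k (f.app (op ⦋m⦌) x) :=
    fun m k x => fnat (SimplexCategory.σ k).op x
  have fδ : ∀ (m : ℕ) (k : Fin (m + 2)) (x : X _⦋m + 1⦌),
      f.app (op ⦋m⦌) (X.δ k x) = Y.δ k (f.app (op ⦋m + 1⦌) x) :=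
    fun m k x => fnat (SimplexCategory.δ k).op x
  have mδ : ∀ (m : ℕ) (k : Fin (m + 2)) (a b c : X _⦋m + 1⦌),
      X.δ k (mX.mal (op ⦋m + 1⦌) a b c)
        = mX.mal (op ⦋m⦌) (X.δ k a) (X.δ k b) (X.δ k c) :=
    fun m k a b c => mX.natural (SimplexCategory.δ k).op a b c
  have sd : ∀ (m : ℕ) (k : Fin (m + 1)) (kk : Fin (m + 2)) (h : (kk : ℕ) = (k : ℕ) + 1)
      (x : X _⦋m⦌), X.δ kk (X.σ k x) = x := by
    intro m k kk h x
    have h2 : kk = Fin.succ k := Fin.ext (by simpa using h)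
    have := ConcreteCategory.congr_hom (X.δ_comp_σ_succ' h2) x
    simpa using this
  refine ⟨?_, ?_, ?_, ?_⟩
  · rw [hcompat, fσ, fσ, fδ, hxj, hw, mY.mal_right]
  · rw [mδ, sd n ⟨(j : ℕ) - 1, by omega⟩ j (by simp; omega), sd n ⟨(j : ℕ) - 1, by omega⟩ j
      (by simp; omega), mX.mal_left]
  · intro l hl i hij xi hxi hcomm
    subst hl
    have hcomm' : X.δ (⟨(i : ℕ), by omega⟩ : Fin (l + 2)) xj
        = X.δ (⟨(j : ℕ) - 1, by omega⟩ : Fin (l + 2)) xi := hcomm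
    have hds : ∀ x : X _⦋l + 1⦌, X.δ i (X.σ (⟨(j : ℕ) - 1, by omega⟩ : Fin (l + 2)) x)
        = X.σ (⟨(j : ℕ) - 2, by omega⟩ : Fin (l + 1))
            (X.δ (⟨(i : ℕ), by omega⟩ : Fin (l + 2)) x) := by
      intro x
      have h1 : i = Fin.castSucc (⟨(i : ℕ), by omega⟩ : Fin (l + 2)) := Fin.ext (by simp)
      have h2 : (⟨(j : ℕ) - 1, by omega⟩ : Fin (l + 2))
          = Fin.succ (⟨(j : ℕ) - 2, by omega⟩ : Fin (l + 1)) := Fin.ext (by simp; omega)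
      have := ConcreteCategory.congr_hom (X.δ_comp_σ_of_le (n := l) (i := ⟨(i : ℕ), by omega⟩)
        (j := ⟨(j : ℕ) - 2, by omega⟩) (by simp [Fin.le_def]; omega)) x
      simp only [types_comp_apply] at this
      conv_lhs => rw [h1, h2]
      exact this
    have hdd : X.δ (⟨(i : ℕ), by omega⟩ : Fin (l + 2)) (X.δ j w)
        = X.δ (⟨(j : ℕ) - 1, by omega⟩ : Fin (l + 2)) xi := by
      have h3 : j = Fin.succ (⟨(j : ℕ) - 1, by omega⟩ : Fin (l + 2)) :=
        Fin.ext (by simp; omega)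
      have h4 : i = Fin.castSucc (⟨(i : ℕ), by omega⟩ : Fin (l + 2)) := Fin.ext (by simp)
      have := ConcreteCategory.congr_hom (X.δ_comp_δ (n := l) (i := ⟨(i : ℕ), by omega⟩)
        (j := ⟨(j : ℕ) - 1, by omega⟩) (by simp [Fin.le_def]; omega)) w
      simp only [types_comp_apply] at this
      rw [congrArg (fun t => X.δ t w) h3, this, ← h4, hxi]
    rw [mδ, hxi, hds, hds, hdd, ← hcomm', mX.mal_right]
  · intro l hl i hji xi hxi hcomm
    subst hl
    have hcomm' : X.δ (⟨(j : ℕ), by omega⟩ : Fin (l + 2)) xi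
        = X.δ (⟨(i : ℕ) - 1, by omega⟩ : Fin (l + 2)) xj := hcomm
    have hds : ∀ x : X _⦋l + 1⦌, X.δ i (X.σ (⟨(j : ℕ) - 1, by omega⟩ : Fin (l + 2)) x)
        = X.σ (⟨(j : ℕ) - 1, by omega⟩ : Fin (l + 1))
            (X.δ (⟨(i : ℕ) - 1, by omega⟩ : Fin (l + 2)) x) := by
      intro x
      have h1 : i = Fin.succ (⟨(i : ℕ) - 1, by omega⟩ : Fin (l + 2)) :=
        Fin.ext (by simp; omega)
      have h2 : (⟨(j : ℕ) - 1, by omega⟩ : Fin (l + 2))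
          = Fin.castSucc (⟨(j : ℕ) - 1, by omega⟩ : Fin (l + 1)) := Fin.ext (by simp)
      have := ConcreteCategory.congr_hom (X.δ_comp_σ_of_gt (n := l) (i := ⟨(i : ℕ) - 1, by omega⟩)
        (j := ⟨(j : ℕ) - 1, by omega⟩) (by simp [Fin.lt_def]; omega)) x
      simp only [types_comp_apply] at this
      conv_lhs => rw [h1, h2]
      exact this
    have hdd : X.δ (⟨(i : ℕ) - 1, by omega⟩ : Fin (l + 2)) (X.δ j w)
        = X.δ (⟨(i : ℕ) - 1, by omega⟩ : Fin (l + 2)) xj := by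
      have h3 : i = Fin.succ (⟨(i : ℕ) - 1, by omega⟩ : Fin (l + 2)) :=
        Fin.ext (by simp; omega)
      have h4 : j = Fin.castSucc (⟨(j : ℕ), by omega⟩ : Fin (l + 2)) :=
        Fin.ext (by simp)
      have := ConcreteCategory.congr_hom (X.δ_comp_δ (n := l) (i := ⟨(j : ℕ), by omega⟩)
        (j := ⟨(i : ℕ) - 1, by omega⟩) (by simp [Fin.le_def]; omega)) w
      simp only [types_comp_apply] at this
      have e2 : X.δ j w = X.δ (Fin.castSucc (⟨(j : ℕ), by omega⟩ : Fin (l + 2))) w :=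
        congrArg (fun t => X.δ t w) h4
      have e3 : X.δ i w = X.δ (Fin.succ (⟨(i : ℕ) - 1, by omega⟩ : Fin (l + 2))) w :=
        congrArg (fun t => X.δ t w) h3
      have step1 := congrArg (X.δ (⟨(i : ℕ) - 1, by omega⟩ : Fin (l + 2))) e2
      have step2 : X.δ (⟨(i : ℕ) - 1, by omega⟩ : Fin (l + 2))
              (X.δ (Fin.castSucc (⟨(j : ℕ), by omega⟩ : Fin (l + 2))) w)
          = X.δ (⟨(j : ℕ), by omega⟩ : Fin (l + 2))
              (X.δ (Fin.succ (⟨(i : ℕ) - 1, by omega⟩ : Fin (l + 2))) w) := this.symm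
      have step3 := congrArg (X.δ (⟨(j : ℕ), by omega⟩ : Fin (l + 2))) (e3.symm.trans hxi)
      exact ((step1.trans step2).trans step3).trans hcomm'
    rw [mδ, hxi, hds, hds, hdd, mX.mal_right]
end
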